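/- arXiv:math/0602122 — 7 statements merged into one kernel-verified Lean document; each statement's English description precedes it below -/
import Mathlib

section
/- Let E : B → A have Index E = 2 and let X_B = e_A C*⟨B, e_A⟩ (1−e_A), with left and right A-actions a·x·b = axb and inner products _A⟨x,y⟩ = ψ^{-1}(xy*), ⟨x,y⟩_A = φ^{-1}(x*y), where ψ(a) = a e_A and φ = β̂ ∘ ψ. Then X_B is an A-A-equivalence bimodule. -/
/- Watatani-style conditional expectations, quasi-bases, and the C*-basic
construction, formalized abstractly. -/

noncomputable section

/-- A conditional expectation of a unital C*-algebra `B` onto a C*-subalgebra `A`. -/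
structure CondExp (B : Type*) [NormedRing B] [StarRing B] [NormedAlgebra ℂ B] [StarModule ℂ B]
    (A : StarSubalgebra ℂ B) where
  toFun : B →ₗ[ℂ] B
  mem_range : ∀ b, toFun b ∈ A
  fixes : ∀ a ∈ A, toFun a = a
  left_mod : ∀ a ∈ A, ∀ b, toFun (a * b) = a * toFun b
  right_mod : ∀ a ∈ A, ∀ b, toFun (b * a) = toFun b * a
  star_map : ∀ b, toFun (star b) = star (toFun b)
  pos : ∀ b, ∃ c, toFun (star b * b) = star c * c

/-- `x` is a quasi-basis for the conditional expectation `E` (with pairs `(x i, (x i)*)`). -/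
def IsQuasiBasis {B : Type*} [NormedRing B] [StarRing B] [NormedAlgebra ℂ B] [StarModule ℂ B]
    {A : StarSubalgebra ℂ B} (E : CondExp B A) {n : ℕ} (x : Fin n → B) : Prop :=
  (∀ b, ∑ i, x i * E.toFun (star (x i) * b) = b) ∧
  (∀ b, ∑ i, E.toFun (b * x i) * star (x i) = b)

/-- The C*-basic construction `C = C*⟨B, e_A⟩` of a conditional expectation `E : B → A`,
with Jones projection `e`. -/
structure BasicConstruction {B : Type*} [NormedRing B] [StarRing B] [NormedAlgebra ℂ B] [StarModule ℂ B]
    {A : StarSubalgebra ℂ B} (E : CondExp B A)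
    (C : Type*) [NormedRing C] [StarRing C] [NormedAlgebra ℂ C] [StarModule ℂ C] where
  ι : B →⋆ₐ[ℂ] C
  inj : Function.Injective ι
  e : C
  e_star : star e = e
  e_idem : e * e = e
  jones : ∀ b, e * ι b * e = ι (E.toFun b) * e
  dense : (Submodule.span ℂ {y : C | ∃ b c : B, y = ι b * e * ι c}).topologicalClosure = ⊤
  mul_e_inj : ∀ b : B, ι b * e = 0 → b = 0

namespace CornerProof

variable {B C : Type*} [CStarAlgebra B] [CStarAlgebra C]
variable {A : StarSubalgebra ℂ B} (E : CondExp B A)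

lemma E_one : E.toFun 1 = 1 := E.fixes 1 (one_mem A)

lemma E_idem (b : B) : E.toFun (E.toFun b) = E.toFun b := E.fixes _ (E.mem_range b)

lemma E_ker_star {b : B} (hb : E.toFun b = 0) : E.toFun (star b) = 0 := by
  rw [E.star_map, hb, star_zero]

variable (bc : BasicConstruction E C)

lemma top_le_of_closed (S : Submodule ℂ C) (hS : IsClosed (S : Set C))
    (h : ∀ b c : B, bc.ι b * bc.e * bc.ι c ∈ S) : ∀ z : C, z ∈ S := by
  intro z
  have h1 : Submodule.span ℂ {y : C | ∃ b c : B, y = bc.ι b * bc.e * bc.ι c} ≤ S :=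
    Submodule.span_le.2 (by rintro y ⟨b, c, rfl⟩; exact h b c)
  have h2 := Submodule.topologicalClosure_minimal _ h1 hS
  rw [bc.dense] at h2
  exact h2 (Submodule.mem_top)

lemma eq_of_forall_gen (u v : C)
    (h : ∀ b c : B, u * (bc.ι b * bc.e * bc.ι c) = v * (bc.ι b * bc.e * bc.ι c)) : u = v := by
  let S : Submodule ℂ C :=
    { carrier := {y | u * y = v * y}
      add_mem' := fun {y} {z} hy hz => by
        simp only [Set.mem_setOf_eq, mul_add] at *; rw [hy, hz]
      zero_mem' := by simp
      smul_mem' := fun r y hy => by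
        simp only [Set.mem_setOf_eq, mul_smul_comm] at *; rw [hy] }
  have hS : IsClosed (S : Set C) :=
    isClosed_eq (continuous_const.mul continuous_id) (continuous_const.mul continuous_id)
  have h1 : u * 1 = v * 1 := top_le_of_closed E bc S hS (fun b c => h b c) 1
  simpa using h1

lemma jonesR (b : B) (r : C) :
    bc.e * (bc.ι b * (bc.e * r)) = bc.ι (E.toFun b) * (bc.e * r) := by
  calc bc.e * (bc.ι b * (bc.e * r)) = (bc.e * bc.ι b * bc.e) * r := by
        simp only [mul_assoc]
    _ = (bc.ι (E.toFun b) * bc.e) * r := by rw [bc.jones]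
    _ = bc.ι (E.toFun b) * (bc.e * r) := by simp only [mul_assoc]

lemma e_comm {a : B} (ha : a ∈ A) : bc.e * bc.ι a = bc.ι a * bc.e := by
  apply eq_of_forall_gen E bc
  intro b c
  simp only [mul_assoc]
  rw [show bc.ι a * (bc.ι b * (bc.e * bc.ι c)) = bc.ι (a * b) * (bc.e * bc.ι c) by
    rw [map_mul, mul_assoc]]
  rw [jonesR E bc (a * b), jonesR E bc b, E.left_mod a ha b, map_mul bc.ι a (E.toFun b),
    mul_assoc]

variable {n : ℕ}

lemma f_one (x : Fin n → B) (hx : IsQuasiBasis E x) : ∑ i, bc.ι (x i) * bc.e * bc.ι (star (x i)) = 1 := by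
  apply eq_of_forall_gen E bc
  intro b c
  rw [Finset.sum_mul, one_mul]
  have hterm : ∀ i, bc.ι (x i) * bc.e * bc.ι (star (x i)) * (bc.ι b * bc.e * bc.ι c)
      = bc.ι (x i * E.toFun (star (x i) * b)) * (bc.e * bc.ι c) := by
    intro i
    simp only [mul_assoc]
    rw [show bc.ι (star (x i)) * (bc.ι b * (bc.e * bc.ι c))
        = bc.ι (star (x i) * b) * (bc.e * bc.ι c) by rw [map_mul, mul_assoc]]
    rw [jonesR E bc (star (x i) * b), map_mul bc.ι (x i) (E.toFun (star (x i) * b)), mul_assoc]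
  rw [Finset.sum_congr rfl (fun i _ => hterm i), ← Finset.sum_mul, ← map_sum, hx.1 b,
    ← mul_assoc]


open Finset in
lemma cp_sum [PartialOrder B] [StarOrderedRing B] {ι' : Type*} [DecidableEq ι']
    (s : Finset ι') : ∀ b c : ι' → B,
    0 ≤ ∑ k ∈ s, ∑ l ∈ s, star (c k) * E.toFun (star (b k) * b l) * c l := by
  induction s using Finset.induction_on with
  | empty => intro b c; simp
  | @insert a s ha ih =>
    intro b c
    have key : ∀ ε : ℝ, 0 < ε →
        0 ≤ (∑ k ∈ insert a s, ∑ l ∈ insert a s, star (c k) * E.toFun (star (b k) * b l) * c l)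
          + (ε : ℂ) • (star (c a) * c a) := by
      intro ε hε
      set α₀ := E.toFun (star (b a) * b a) with hα₀def
      have hα₀A : α₀ ∈ A := E.mem_range _
      obtain ⟨c₀, hc₀⟩ := E.pos (b a)
      have hα₀nn : 0 ≤ α₀ := by rw [hα₀def, hc₀]; exact star_mul_self_nonneg c₀
      have hα₀sa : star α₀ = α₀ := by rw [hα₀def, hc₀]; simp [star_mul, mul_assoc]
      set εB : B := (ε : ℂ) • (1 : B) with hεBdef
      have hεA : εB ∈ A := A.smul_mem (one_mem A) _
      have hcstar : star ((ε : ℂ)) = (ε : ℂ) := by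
        rw [Complex.star_def, Complex.conj_ofReal]
      have hεsa : star εB = εB := by
        rw [hεBdef, star_smul, star_one, hcstar]
      have hsqrt : ((Real.sqrt ε : ℝ) : ℂ) * ((Real.sqrt ε : ℝ) : ℂ) = (ε : ℂ) := by
        rw [← Complex.ofReal_mul, Real.mul_self_sqrt hε.le]
      have hcstar2 : star ((Real.sqrt ε : ℝ) : ℂ) = ((Real.sqrt ε : ℝ) : ℂ) := by
        rw [Complex.star_def, Complex.conj_ofReal]
      have epos : ∀ z : B, 0 ≤ (ε : ℂ) • (star z * z) := by
        intro z
        have h1 := star_mul_self_nonneg (((Real.sqrt ε : ℝ) : ℂ) • z)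
        rwa [star_smul, hcstar2, smul_mul_smul_comm, hsqrt] at h1
      have hεnn : 0 ≤ εB := by have h1 := epos 1; rwa [star_one, one_mul] at h1
      set α : B := α₀ + εB with hαdef
      have hαA : α ∈ A := add_mem hα₀A hεA
      have hαsa : star α = α := by rw [hαdef, star_add, hα₀sa, hεsa]
      have hαnn : 0 ≤ α := add_nonneg hα₀nn hεnn
      have hεU : IsUnit εB := by
        rw [hεBdef, ← Algebra.algebraMap_eq_smul_one]
        exact (isUnit_iff_ne_zero.mpr (by exact_mod_cast hε.ne')).map (algebraMap ℂ B)
      have hU : IsUnit α := CStarAlgebra.isUnit_of_le εB (le_add_of_nonneg_left hα₀nn) ⟨hεnn, hεU⟩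
      set h : B := (↑hU.unit⁻¹ : B) with hhdef
      have hαh : α * h = 1 := hU.mul_val_inv
      have hhα : h * α = 1 := hU.val_inv_mul
      have hhsa : star h = h := by
        have h1 : star h * α = 1 := by rw [← hαsa, ← star_mul, hαh, star_one]
        calc star h = star h * (α * h) := by rw [hαh, mul_one]
          _ = (star h * α) * h := by rw [mul_assoc]
          _ = h := by rw [h1, one_mul]
      have pullRh : ∀ w, E.toFun (w * h) = E.toFun w * h := by
        intro w
        have h1 : E.toFun (w * h) * α = E.toFun w := by
          rw [← E.right_mod α hαA, mul_assoc, hhα, mul_one]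
        calc E.toFun (w * h) = E.toFun (w * h) * (α * h) := by rw [hαh, mul_one]
          _ = (E.toFun (w * h) * α) * h := by rw [mul_assoc]
          _ = E.toFun w * h := by rw [h1]
      have pullLh : ∀ w, E.toFun (h * w) = h * E.toFun w := by
        intro w
        have h1 : α * E.toFun (h * w) = E.toFun w := by
          rw [← E.left_mod α hαA, ← mul_assoc, hαh, one_mul]
        calc E.toFun (h * w) = (h * α) * E.toFun (h * w) := by rw [hhα, one_mul]
          _ = h * (α * E.toFun (h * w)) := by rw [mul_assoc]
          _ = h * E.toFun w := by rw [h1]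
      set v := ∑ l ∈ s, E.toFun (star (b a) * b l) * c l with hvdef
      set g : ι' → B := fun k => b k - b a * (h * E.toFun (star (b a) * b k)) with hgdef
      set w : B := h * v + c a with hwdef
      have hstarv : star v = ∑ l ∈ s, star (c l) * E.toFun (star (b l) * b a) := by
        rw [hvdef, star_sum]
        refine Finset.sum_congr rfl fun l _ => ?_
        rw [star_mul, ← E.star_map, star_mul, star_star]
      -- the modified Gram entries
      have hg : ∀ k l : ι', E.toFun (star (g k) * g l)
          = E.toFun (star (b k) * b l)
            - E.toFun (star (b k) * b a) * (h * E.toFun (star (b a) * b l))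
            - (ε : ℂ) • (E.toFun (star (b k) * b a) * ((h * h) * E.toFun (star (b a) * b l))) := by
        intro k l
        have hsg : star (g k) = star (b k) - E.toFun (star (b k) * b a) * (h * star (b a)) := by
          rw [hgdef]
          simp only
          rw [star_sub, star_mul, star_mul, hhsa, ← E.star_map, star_mul, star_star, mul_assoc]
        have hEkA : E.toFun (star (b k) * b a) ∈ A := E.mem_range _
        have hElA : E.toFun (star (b a) * b l) ∈ A := E.mem_range _
        rw [hsg, hgdef]
        simp only
        rw [sub_mul, mul_sub, mul_sub, map_sub, map_sub, map_sub]
        -- t2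
        have ht2 : E.toFun (star (b k) * (b a * (h * E.toFun (star (b a) * b l))))
            = E.toFun (star (b k) * b a) * (h * E.toFun (star (b a) * b l)) := by
          rw [show star (b k) * (b a * (h * E.toFun (star (b a) * b l)))
              = ((star (b k) * b a) * h) * E.toFun (star (b a) * b l) by
            simp only [mul_assoc]]
          rw [E.right_mod _ hElA, pullRh, mul_assoc]
        -- t3
        have ht3 : E.toFun ((E.toFun (star (b k) * b a) * (h * star (b a))) * b l)
            = E.toFun (star (b k) * b a) * (h * E.toFun (star (b a) * b l)) := by
          rw [show (E.toFun (star (b k) * b a) * (h * star (b a))) * b l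
              = E.toFun (star (b k) * b a) * (h * (star (b a) * b l)) by simp only [mul_assoc]]
          rw [E.left_mod _ hEkA, pullLh]
        -- t4
        have ht4 : E.toFun ((E.toFun (star (b k) * b a) * (h * star (b a)))
              * (b a * (h * E.toFun (star (b a) * b l))))
            = E.toFun (star (b k) * b a) * (h * E.toFun (star (b a) * b l))
              - (ε : ℂ) • (E.toFun (star (b k) * b a) * ((h * h) * E.toFun (star (b a) * b l))) := by
          rw [show (E.toFun (star (b k) * b a) * (h * star (b a)))
                * (b a * (h * E.toFun (star (b a) * b l)))
              = E.toFun (star (b k) * b a) * (h * (((star (b a) * b a) * h)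
                  * E.toFun (star (b a) * b l))) by simp only [mul_assoc]]
          rw [E.left_mod _ hEkA, pullLh, E.right_mod _ hElA, pullRh, ← hα₀def]
          have hα₀h : α₀ * h = 1 - (ε : ℂ) • h := by
            have : α₀ = α - εB := by rw [hαdef]; abel
            rw [this, sub_mul, hαh, hεBdef, smul_mul_assoc, one_mul]
          rw [hα₀h]
          rw [sub_mul, one_mul, mul_sub, mul_sub, smul_mul_assoc, mul_smul_comm, mul_smul_comm,
            mul_assoc]
        rw [ht2, ht3, ht4]
        abel
      -- double-sum reduction helper
      have hdouble : ∀ m : B, (∑ k ∈ s, ∑ l ∈ s,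
          star (c k) * (E.toFun (star (b k) * b a) * (m * E.toFun (star (b a) * b l))) * c l)
          = star v * (m * v) := by
        intro m
        have hinner : ∀ k, (∑ l ∈ s,
            star (c k) * (E.toFun (star (b k) * b a) * (m * E.toFun (star (b a) * b l))) * c l)
            = (star (c k) * E.toFun (star (b k) * b a)) * (m * v) := by
          intro k
          rw [hvdef, Finset.mul_sum, Finset.mul_sum]
          refine Finset.sum_congr rfl fun l _ => ?_
          simp only [mul_assoc]
        rw [Finset.sum_congr rfl (fun k _ => hinner k), ← Finset.sum_mul, ← hstarv]
      -- splitting the base double sum using the modified Gram entries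
      have hQss : (∑ k ∈ s, ∑ l ∈ s, star (c k) * E.toFun (star (b k) * b l) * c l)
          = (∑ k ∈ s, ∑ l ∈ s, star (c k) * E.toFun (star (g k) * g l) * c l)
            + star v * (h * v) + (ε : ℂ) • (star v * ((h * h) * v)) := by
        have hterm : ∀ k l, star (c k) * E.toFun (star (b k) * b l) * c l
            = star (c k) * E.toFun (star (g k) * g l) * c l
              + star (c k) * (E.toFun (star (b k) * b a)
                  * (h * E.toFun (star (b a) * b l))) * c l
              + (ε : ℂ) • (star (c k) * (E.toFun (star (b k) * b a)
                  * ((h * h) * E.toFun (star (b a) * b l))) * c l) := by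
          intro k l
          rw [hg k l, mul_sub, mul_sub, sub_mul, sub_mul, mul_smul_comm, smul_mul_assoc]
          abel
        rw [Finset.sum_congr rfl (fun k _ => Finset.sum_congr rfl (fun l _ => hterm k l))]
        simp only [Finset.sum_add_distrib, ← Finset.smul_sum]
        rw [hdouble h, hdouble (h * h)]
      -- expanding the sum over `insert a s`
      have hrow : (∑ l ∈ s, star (c a) * E.toFun (star (b a) * b l) * c l)
          = star (c a) * v := by
        rw [hvdef, Finset.mul_sum]
        exact Finset.sum_congr rfl fun l _ => by simp only [mul_assoc]
      have hcol : (∑ k ∈ s, star (c k) * E.toFun (star (b k) * b a) * c a)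
          = star v * c a := by
        rw [hstarv, Finset.sum_mul]
      have hins : (∑ k ∈ insert a s, ∑ l ∈ insert a s,
            star (c k) * E.toFun (star (b k) * b l) * c l)
          = star (c a) * α₀ * c a + star (c a) * v + star v * c a
            + ∑ k ∈ s, ∑ l ∈ s, star (c k) * E.toFun (star (b k) * b l) * c l := by
        rw [Finset.sum_insert ha, Finset.sum_insert ha,
          Finset.sum_congr rfl (fun k (_ : k ∈ s) => Finset.sum_insert ha (f := fun l =>
            star (c k) * E.toFun (star (b k) * b l) * c l)),
          Finset.sum_add_distrib, hrow, hcol, ← hα₀def]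
        abel
      -- expanding star w * (α * w)
      have hwexp : star w * (α * w)
          = star v * (h * v) + star v * c a + star (c a) * v + star (c a) * α₀ * c a
            + (ε : ℂ) • (star (c a) * c a) := by
        have e1 : α * (h * v) = v := by rw [← mul_assoc, hαh, one_mul]
        calc star w * (α * w)
            = (star v * h + star (c a)) * (α * (h * v) + α * c a) := by
              rw [hwdef, star_add, star_mul, hhsa, mul_add]
          _ = (star v * h) * v + (star v * h) * (α * c a)
              + (star (c a) * v + star (c a) * (α * c a)) := by
              rw [add_mul, mul_add, mul_add, e1]
          _ = star v * (h * v) + star v * ((h * α) * c a)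
              + (star (c a) * v + star (c a) * (α * c a)) := by
              rw [mul_assoc (star v) h v, mul_assoc (star v) h (α * c a),
                mul_assoc h α (c a)]
          _ = star v * (h * v) + star v * c a
              + (star (c a) * v + (star (c a) * (α₀ * c a)
                  + (ε : ℂ) • (star (c a) * c a))) := by
              rw [hhα, one_mul, hαdef, add_mul, mul_add, hεBdef, smul_mul_assoc, one_mul,
                mul_smul_comm]
          _ = star v * (h * v) + star v * c a + star (c a) * v + star (c a) * α₀ * c a
              + (ε : ℂ) • (star (c a) * c a) := by
              rw [← mul_assoc (star (c a)) α₀ (c a)]; abel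
      -- final combination
      have hfinal : (∑ k ∈ insert a s, ∑ l ∈ insert a s,
            star (c k) * E.toFun (star (b k) * b l) * c l)
          + (ε : ℂ) • (star (c a) * c a)
          = (∑ k ∈ s, ∑ l ∈ s, star (c k) * E.toFun (star (g k) * g l) * c l)
            + star w * (α * w) + (ε : ℂ) • (star v * ((h * h) * v)) := by
        rw [hins, hQss, hwexp]; abel
      rw [hfinal]
      have hconj : 0 ≤ star w * (α * w) := by
        have h1 := star_left_conjugate_nonneg hαnn w
        simpa [mul_assoc] using h1
      have hsm : 0 ≤ (ε : ℂ) • (star v * ((h * h) * v)) := by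
        have h1 := epos (h * v)
        have hrw : star (h * v) * (h * v) = star v * ((h * h) * v) := by
          rw [star_mul, hhsa]; simp only [mul_assoc]
        rwa [hrw] at h1
      exact add_nonneg (add_nonneg (ih g c) hconj) hsm
    -- let ε → 0⁺
    have hc : Continuous (fun ε : ℝ => (∑ k ∈ insert a s, ∑ l ∈ insert a s,
        star (c k) * E.toFun (star (b k) * b l) * c l) + (ε : ℂ) • (star (c a) * c a)) :=
      continuous_const.add ((Complex.continuous_ofReal).smul continuous_const)
    have htd : Filter.Tendsto (fun ε : ℝ => (∑ k ∈ insert a s, ∑ l ∈ insert a s,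
        star (c k) * E.toFun (star (b k) * b l) * c l) + (ε : ℂ) • (star (c a) * c a))
        (nhdsWithin 0 (Set.Ioi 0)) (nhds (∑ k ∈ insert a s, ∑ l ∈ insert a s,
        star (c k) * E.toFun (star (b k) * b l) * c l)) := by
      have h0 := hc.tendsto 0
      simp only [Complex.ofReal_zero, zero_smul, add_zero] at h0
      exact h0.mono_left nhdsWithin_le_nhds
    exact (CStarAlgebra.isClosed_nonneg : IsClosed {t : B | 0 ≤ t}).mem_of_tendsto htd
      (eventually_nhdsWithin_of_forall fun ε hε => key ε hε)


lemma diamond [PartialOrder B] [StarOrderedRing B] {n : ℕ} (x : Fin n → B)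
    (hx : IsQuasiBasis E x) (hidx : ∑ i, x i * star (x i) = (2 : B))
    {b₀ : B} (hb : E.toFun b₀ = 0) :
    0 ≤ E.toFun (star b₀ * b₀) - star b₀ * b₀ := by
  classical
  have h0 := cp_sum E (Finset.univ : Finset (Option (Fin n)))
      (fun o => o.elim b₀ (fun k => b₀ * x k - E.toFun (b₀ * x k)))
      (fun o => o.elim (-1) (fun k => star (x k)))
  simp only [Fintype.sum_option, Option.elim_none, Option.elim_some,
    star_neg, star_one, neg_mul, one_mul, mul_neg, mul_one, neg_neg, star_star] at h0
  have hsE : E.toFun (star b₀) = 0 := E_ker_star E hb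
  -- row block
  have hrow : (∑ l : Fin n, -(E.toFun (star b₀ * (b₀ * x l - E.toFun (b₀ * x l))) * star (x l)))
      = -(star b₀ * b₀) := by
    rw [Finset.sum_neg_distrib]
    congr 1
    have hterm : ∀ l, E.toFun (star b₀ * (b₀ * x l - E.toFun (b₀ * x l)))
        = E.toFun ((star b₀ * b₀) * x l) := by
      intro l
      rw [mul_sub, map_sub, E.right_mod _ (E.mem_range _), hsE, zero_mul, sub_zero,
        ← mul_assoc]
    rw [Finset.sum_congr rfl fun l _ => by rw [hterm l]]
    exact hx.2 (star b₀ * b₀)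
  -- column block
  have hcol : (∑ k : Fin n, -(x k * E.toFun (star (b₀ * x k - E.toFun (b₀ * x k)) * b₀)))
      = -(star b₀ * b₀) := by
    rw [Finset.sum_neg_distrib]
    congr 1
    have hterm : ∀ k, E.toFun (star (b₀ * x k - E.toFun (b₀ * x k)) * b₀)
        = E.toFun (star (x k) * (star b₀ * b₀)) := by
      intro k
      rw [star_sub, sub_mul, map_sub, E.left_mod _ (star_mem (E.mem_range _)), hb,
        mul_zero, sub_zero, star_mul, mul_assoc]
    rw [Finset.sum_congr rfl fun k _ => by rw [hterm k]]
    exact hx.1 (star b₀ * b₀)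
  -- main block
  have hgram : ∀ k l : Fin n,
      E.toFun (star (b₀ * x k - E.toFun (b₀ * x k)) * (b₀ * x l - E.toFun (b₀ * x l)))
      = E.toFun (star (x k) * (star b₀ * (b₀ * x l)))
        - star (E.toFun (b₀ * x k)) * E.toFun (b₀ * x l) := by
    intro k l
    rw [star_sub, sub_mul, mul_sub, mul_sub, map_sub, map_sub, map_sub,
      E.right_mod (E.toFun (b₀ * x l)) (E.mem_range _) (star (b₀ * x k)),
      E.left_mod (star (E.toFun (b₀ * x k))) (star_mem (E.mem_range _)) (b₀ * x l),
      E.left_mod (star (E.toFun (b₀ * x k))) (star_mem (E.mem_range _)) (E.toFun (b₀ * x l)),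
      E.star_map, E_idem,
      show star (b₀ * x k) * (b₀ * x l) = star (x k) * (star b₀ * (b₀ * x l)) by
        rw [star_mul]; simp only [mul_assoc]]
    abel
  have hblock : (∑ k : Fin n, ∑ l : Fin n,
      x k * E.toFun (star (b₀ * x k - E.toFun (b₀ * x k)) * (b₀ * x l - E.toFun (b₀ * x l)))
        * star (x l))
      = star b₀ * b₀ + star b₀ * b₀ - star b₀ * b₀ := by
    have hsplit : ∀ k l : Fin n,
        x k * E.toFun (star (b₀ * x k - E.toFun (b₀ * x k)) * (b₀ * x l - E.toFun (b₀ * x l)))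
          * star (x l)
        = x k * E.toFun (star (x k) * (star b₀ * (b₀ * x l))) * star (x l)
          - x k * (star (E.toFun (b₀ * x k)) * E.toFun (b₀ * x l)) * star (x l) := by
      intro k l
      rw [hgram k l, mul_sub, sub_mul]
    rw [Finset.sum_congr rfl fun k _ => Finset.sum_congr rfl fun l _ => hsplit k l]
    simp only [Finset.sum_sub_distrib]
    have hA : (∑ k : Fin n, ∑ l : Fin n,
        x k * E.toFun (star (x k) * (star b₀ * (b₀ * x l))) * star (x l))
        = star b₀ * b₀ + star b₀ * b₀ := by
      rw [Finset.sum_comm]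
      have hin : ∀ l, (∑ k : Fin n, x k * E.toFun (star (x k) * (star b₀ * (b₀ * x l)))
          * star (x l)) = star b₀ * (b₀ * (x l * star (x l))) := by
        intro l
        rw [← Finset.sum_mul, hx.1 (star b₀ * (b₀ * x l))]
        simp only [mul_assoc]
      rw [Finset.sum_congr rfl fun l _ => hin l, ← Finset.mul_sum, ← Finset.mul_sum, hidx,
        mul_two, mul_add]
    have hB : (∑ k : Fin n, ∑ l : Fin n,
        x k * (star (E.toFun (b₀ * x k)) * E.toFun (b₀ * x l)) * star (x l))
        = star b₀ * b₀ := by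
      have hin : ∀ k, (∑ l : Fin n,
          x k * (star (E.toFun (b₀ * x k)) * E.toFun (b₀ * x l)) * star (x l))
          = (x k * star (E.toFun (b₀ * x k))) * b₀ := by
        intro k
        have : ∀ l, x k * (star (E.toFun (b₀ * x k)) * E.toFun (b₀ * x l)) * star (x l)
            = (x k * star (E.toFun (b₀ * x k))) * (E.toFun (b₀ * x l) * star (x l)) := by
          intro l; simp only [mul_assoc]
        rw [Finset.sum_congr rfl fun l _ => this l, ← Finset.mul_sum, hx.2 b₀]
      rw [Finset.sum_congr rfl fun k _ => hin k, ← Finset.sum_mul]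
      have : (∑ k : Fin n, x k * star (E.toFun (b₀ * x k))) = star b₀ := by
        rw [show (∑ k : Fin n, x k * star (E.toFun (b₀ * x k)))
            = star (∑ k : Fin n, E.toFun (b₀ * x k) * star (x k)) by
          rw [star_sum]; exact Finset.sum_congr rfl fun k _ => by
            rw [star_mul, star_star]]
        rw [hx.2 b₀]
      rw [this]
    rw [hA, hB]
  rw [Finset.sum_add_distrib, hrow, hcol, hblock] at h0
  rwa [show E.toFun (star b₀ * b₀) + -(star b₀ * b₀)
      + (-(star b₀ * b₀) + (star b₀ * b₀ + star b₀ * b₀ - star b₀ * b₀))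
      = E.toFun (star b₀ * b₀) - star b₀ * b₀ from by abel] at h0


lemma E_faithful [PartialOrder B] [StarOrderedRing B] (bc : BasicConstruction E C)
    {p : B} (hp : 0 ≤ p) (h0 : E.toFun p = 0) : p = 0 := by
  set s := CFC.sqrt p with hs
  have hs_nn : 0 ≤ s := CFC.sqrt_nonneg (a := p)
  have hss : s * s = p := CFC.sqrt_mul_sqrt_self p hp
  have hsa : star s = s := (IsSelfAdjoint.of_nonneg hs_nn).star_eq
  have h1 : star (bc.ι s * bc.e) * (bc.ι s * bc.e) = 0 := by
    rw [star_mul, bc.e_star, ← map_star, hsa]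
    calc bc.e * bc.ι s * (bc.ι s * bc.e) = bc.e * bc.ι (s * s) * bc.e := by
          rw [map_mul]; simp only [mul_assoc]
      _ = bc.ι (E.toFun (s * s)) * bc.e := bc.jones _
      _ = 0 := by rw [hss, h0, map_zero, zero_mul]
  have h2 : bc.ι s * bc.e = 0 := by
    have h3 := CStarRing.norm_star_mul_self (x := bc.ι s * bc.e)
    rw [h1, norm_zero] at h3
    exact norm_eq_zero.mp (mul_self_eq_zero.mp h3.symm)
  have hs0 : s = 0 := bc.mul_e_inj s h2
  rw [← hss, hs0, mul_zero]

lemma ker_mul_ker [PartialOrder B] [StarOrderedRing B] (bc : BasicConstruction E C)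
    {n : ℕ} (x : Fin n → B) (hx : IsQuasiBasis E x)
    (hidx : ∑ i, x i * star (x i) = (2 : B))
    {b₀ c₀ : B} (hb : E.toFun b₀ = 0) (hc : E.toFun c₀ = 0) :
    E.toFun (b₀ * c₀) = b₀ * c₀ := by
  have sq : ∀ {d : B}, E.toFun d = 0 → E.toFun (star d * d) = star d * d := by
    intro d hd
    have h1 := diamond E x hx hidx hd
    have h2 : E.toFun (E.toFun (star d * d) - star d * d) = 0 := by
      rw [map_sub, E_idem, sub_self]
    exact sub_eq_zero.mp (E_faithful E bc h1 h2)
  set u := star b₀ with hu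
  have hEu : E.toFun u = 0 := E_ker_star E hb
  have hEu2 : E.toFun (Complex.I • u) = 0 := by rw [map_smul, hEu, smul_zero]
  have hEuc : E.toFun (u + c₀) = 0 := by rw [map_add, hEu, hc, add_zero]
  have hEuc2 : E.toFun (Complex.I • u + c₀) = 0 := by rw [map_add, hEu2, hc, add_zero]
  -- A1 := star u * c₀ + star c₀ * u is fixed by E
  have hA1exp : star u * c₀ + star c₀ * u
      = star (u + c₀) * (u + c₀) - star u * u - star c₀ * c₀ := by
    rw [star_add, add_mul, mul_add, mul_add]; abel
  have hA1 : E.toFun (star u * c₀ + star c₀ * u) = star u * c₀ + star c₀ * u := by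
    rw [hA1exp, map_sub, map_sub, sq hEuc, sq hEu, sq hc]
  -- A2 := (-I) • (star u * c₀) + I • (star c₀ * u) is fixed by E
  have hA2exp : (-Complex.I) • (star u * c₀) + Complex.I • (star c₀ * u)
      = star (Complex.I • u + c₀) * (Complex.I • u + c₀) - star u * u - star c₀ * c₀ := by
    rw [star_add, add_mul, mul_add, mul_add, star_smul, smul_mul_assoc, smul_mul_assoc,
      mul_smul_comm, mul_smul_comm, smul_smul]
    rw [show star Complex.I = -Complex.I by
      rw [Complex.star_def, Complex.conj_I]]
    rw [show -Complex.I * Complex.I = (1 : ℂ) by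
      rw [neg_mul, Complex.I_mul_I, neg_neg]]
    simp only [one_smul, neg_smul]
    abel
  have hA2 : E.toFun ((-Complex.I) • (star u * c₀) + Complex.I • (star c₀ * u))
      = (-Complex.I) • (star u * c₀) + Complex.I • (star c₀ * u) := by
    rw [hA2exp, map_sub, map_sub, sq hEuc2, sq hEu, sq hc]
  -- recover star u * c₀
  have hrec : star u * c₀ = (2⁻¹ : ℂ) • ((star u * c₀ + star c₀ * u)
      + Complex.I • ((-Complex.I) • (star u * c₀) + Complex.I • (star c₀ * u))) := by
    have h1 : Complex.I • ((-Complex.I) • (star u * c₀) + Complex.I • (star c₀ * u))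
        = star u * c₀ - star c₀ * u := by
      rw [smul_add, smul_smul, smul_smul,
        show Complex.I * -Complex.I = (1 : ℂ) by rw [mul_neg, Complex.I_mul_I, neg_neg],
        show Complex.I * Complex.I = (-1 : ℂ) from Complex.I_mul_I,
        one_smul, neg_one_smul]
      abel
    rw [h1, show star u * c₀ + star c₀ * u + (star u * c₀ - star c₀ * u)
        = (2 : ℂ) • (star u * c₀) by
      rw [two_smul]; abel]
    rw [smul_smul]
    norm_num
  have hfix : E.toFun (star u * c₀) = star u * c₀ := by
    conv_lhs => rw [hrec]
    rw [map_smul, map_add, hA1, map_smul, hA2, ← hrec]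
  rw [show b₀ * c₀ = star u * c₀ by rw [hu, star_star]]
  exact hfix


lemma star_split [PartialOrder B] [StarOrderedRing B] (bc : BasicConstruction E C)
    {n : ℕ} (x : Fin n → B) (hx : IsQuasiBasis E x)
    (hidx : ∑ i, x i * star (x i) = (2 : B))
    {b₀ : B} (hb : E.toFun b₀ = 0) :
    bc.ι b₀ = bc.e * bc.ι b₀ + bc.ι b₀ * bc.e := by
  have hkey : ∀ w, E.toFun (b₀ * w) + b₀ * E.toFun w = b₀ * w := by
    intro w
    have h1 : E.toFun (b₀ * (w - E.toFun w)) = b₀ * (w - E.toFun w) :=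
      ker_mul_ker E bc x hx hidx hb (by rw [map_sub, E_idem, sub_self])
    have h2 : E.toFun (b₀ * E.toFun w) = E.toFun b₀ * E.toFun w :=
      E.right_mod _ (E.mem_range _) b₀
    have h3 : E.toFun (b₀ * w) = E.toFun (b₀ * (w - E.toFun w)) + E.toFun (b₀ * E.toFun w) := by
      rw [← map_add]
      congr 1
      rw [mul_sub]
      abel
    rw [h3, h1, h2, hb, zero_mul, add_zero, mul_sub]
    abel
  symm
  apply eq_of_forall_gen E bc
  intro b c
  rw [add_mul]
  simp only [mul_assoc]
  rw [show bc.ι b₀ * (bc.ι b * (bc.e * bc.ι c)) = bc.ι (b₀ * b) * (bc.e * bc.ι c) by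
    rw [map_mul, mul_assoc]]
  rw [jonesR E bc (b₀ * b), jonesR E bc b]
  rw [show bc.ι b₀ * (bc.ι (E.toFun b) * (bc.e * bc.ι c))
      = bc.ι (b₀ * E.toFun b) * (bc.e * bc.ι c) by rw [map_mul, mul_assoc]]
  rw [← add_mul, ← map_add, hkey b]

lemma key2 [PartialOrder B] [StarOrderedRing B] (bc : BasicConstruction E C)
    {n : ℕ} (x : Fin n → B) (hx : IsQuasiBasis E x)
    (hidx : ∑ i, x i * star (x i) = (2 : B))
    {b₀ c₀ : B} (hb : E.toFun b₀ = 0) (hc : E.toFun c₀ = 0) :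
    bc.ι b₀ * bc.e * bc.ι c₀ = bc.ι (b₀ * c₀) * (1 - bc.e) := by
  have h1 : bc.e * bc.ι c₀ = bc.ι c₀ - bc.ι c₀ * bc.e := by
    rw [eq_sub_iff_add_eq, ← star_split E bc x hx hidx hc]
  rw [mul_assoc, h1, mul_sub, ← map_mul, mul_sub, mul_one, ← mul_assoc, ← map_mul]

lemma A_closed (bc : BasicConstruction E C) : IsClosed (A : Set B) := by
  have hι : Continuous bc.ι := (NonUnitalStarAlgHom.isometry bc.ι bc.inj).continuous
  have hchar : (A : Set B) = {b : B | bc.e * bc.ι b - bc.ι b * bc.e = 0} := by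
    ext b
    simp only [Set.mem_setOf_eq, SetLike.mem_coe, sub_eq_zero]
    constructor
    · exact fun hb => e_comm E bc hb
    · intro hcomm
      have h1 : bc.ι (E.toFun b - b) * bc.e = 0 := by
        rw [map_sub, sub_mul, ← bc.jones b, hcomm, mul_assoc, bc.e_idem, sub_self]
      have h2 := bc.mul_e_inj _ h1
      have h3 : E.toFun b = b := by rwa [sub_eq_zero] at h2
      rw [← h3]; exact E.mem_range b
  rw [hchar]
  exact isClosed_eq ((continuous_const.mul hι).sub (hι.mul continuous_const)) continuous_const

lemma ece_mem (bc : BasicConstruction E C) (hA : IsClosed (A : Set B)) :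
    ∀ z : C, ∃ a ∈ A, bc.e * z * bc.e = bc.ι a * bc.e := by
  haveI : IsClosed ((A : Set B)) := hA
  let ψ : ↥A →⋆ₙₐ[ℂ] C :=
    { toFun := fun a => bc.ι ↑a * bc.e
      map_smul' := fun r a => by simp [map_smul, smul_mul_assoc]
      map_zero' := by simp
      map_add' := fun a b => by simp [map_add, add_mul]
      map_mul' := fun a b => by
        show bc.ι ((↑a : B) * ↑b) * bc.e = bc.ι ↑a * bc.e * (bc.ι ↑b * bc.e)
        rw [map_mul, mul_assoc (bc.ι ↑a) bc.e (bc.ι ↑b * bc.e),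
          ← mul_assoc bc.e (bc.ι ↑b) bc.e, e_comm E bc b.2,
          mul_assoc (bc.ι ↑b) bc.e bc.e, bc.e_idem, ← mul_assoc]
      map_star' := fun a => by
        show bc.ι (star (↑a : B)) * bc.e = star (bc.ι ↑a * bc.e)
        rw [star_mul, bc.e_star, ← map_star, e_comm E bc (star_mem a.2)] }
  have hinj : Function.Injective ψ := by
    intro a b hab
    have h1 : bc.ι (↑a - ↑b) * bc.e = 0 := by
      rw [map_sub, sub_mul, sub_eq_zero]
      exact hab
    exact Subtype.ext (sub_eq_zero.mp (bc.mul_e_inj _ h1))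
  have hiso : Isometry ψ := NonUnitalStarAlgHom.isometry ψ hinj
  have hclosed : IsClosed (Set.range ψ) := hiso.isClosedEmbedding.isClosed_range
  let M : Submodule ℂ C :=
    { carrier := Set.range ψ
      add_mem' := fun {y} {z} hy hz => by
        obtain ⟨a, ha⟩ := hy
        obtain ⟨b, hb⟩ := hz
        exact ⟨a + b, by rw [map_add, ha, hb]⟩
      zero_mem' := ⟨0, map_zero ψ⟩
      smul_mem' := fun r y hy => by
        obtain ⟨a, ha⟩ := hy
        exact ⟨r • a, by rw [map_smul, ha]⟩ }
  let L : C →ₗ[ℂ] C := (LinearMap.mulLeft ℂ bc.e).comp (LinearMap.mulRight ℂ bc.e)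
  have hLcont : Continuous fun z : C => bc.e * (z * bc.e) :=
    continuous_const.mul (continuous_id.mul continuous_const)
  have hmem : ∀ z : C, L z ∈ M := by
    apply top_le_of_closed E bc (Submodule.comap L M)
    · exact IsClosed.preimage hLcont hclosed
    · intro b c
      have hcalc : L (bc.ι b * bc.e * bc.ι c) = bc.ι (E.toFun b * E.toFun c) * bc.e := by
        show bc.e * ((bc.ι b * bc.e * bc.ι c) * bc.e) = _
        rw [map_mul]
        calc bc.e * ((bc.ι b * bc.e * bc.ι c) * bc.e)
            = (bc.e * bc.ι b * bc.e) * (bc.ι c * bc.e) := by simp only [mul_assoc]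
          _ = (bc.ι (E.toFun b) * bc.e) * (bc.ι c * bc.e) := by rw [bc.jones]
          _ = bc.ι (E.toFun b) * (bc.e * bc.ι c * bc.e) := by simp only [mul_assoc]
          _ = bc.ι (E.toFun b) * (bc.ι (E.toFun c) * bc.e) := by rw [bc.jones]
          _ = bc.ι (E.toFun b) * bc.ι (E.toFun c) * bc.e := by simp only [mul_assoc]
      show L (bc.ι b * bc.e * bc.ι c) ∈ M
      rw [hcalc]
      exact ⟨⟨E.toFun b * E.toFun c, mul_mem (E.mem_range b) (E.mem_range c)⟩, rfl⟩
  intro z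
  obtain ⟨a, ha⟩ : ∃ a : ↥A, bc.ι ↑a * bc.e = bc.e * (z * bc.e) := hmem z
  exact ⟨↑a, a.2, by rw [mul_assoc]; exact ha.symm⟩


lemma e_mul_inj (bc : BasicConstruction E C) {b : B} (h : bc.e * bc.ι b = 0) : b = 0 := by
  have h1 : bc.ι (star b) * bc.e = 0 := by
    have h2 := congrArg star h
    rwa [star_mul, star_zero, bc.e_star, ← map_star] at h2
  have h3 := bc.mul_e_inj _ h1
  simpa using congrArg star h3

lemma q_frame (bc : BasicConstruction E C) {n : ℕ} (x : Fin n → B) (hx : IsQuasiBasis E x) :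
    (1 : C) - bc.e
      = ∑ i, bc.ι (x i - E.toFun (x i)) * bc.e * bc.ι (star (x i - E.toFun (x i))) := by
  have hterm : ∀ i, (1 - bc.e) * (bc.ι (x i) * bc.e * bc.ι (star (x i))) * (1 - bc.e)
      = bc.ι (x i - E.toFun (x i)) * bc.e * bc.ι (star (x i - E.toFun (x i))) := by
    intro i
    have h1 : (1 - bc.e) * (bc.ι (x i) * bc.e) = bc.ι (x i - E.toFun (x i)) * bc.e := by
      rw [sub_mul, one_mul, ← mul_assoc, bc.jones, map_sub, sub_mul]
    have h2 : bc.e * bc.ι (star (x i)) * (1 - bc.e)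
        = bc.e * bc.ι (star (x i - E.toFun (x i))) := by
      rw [mul_sub, mul_one, bc.jones, ← e_comm E bc (E.mem_range _), star_sub, ← E.star_map,
        map_sub, mul_sub]
    rw [show (1 - bc.e) * (bc.ι (x i) * bc.e * bc.ι (star (x i)))
        = bc.ι (x i - E.toFun (x i)) * bc.e * bc.ι (star (x i)) by
      rw [← mul_assoc, h1]]
    rw [mul_assoc (bc.ι (x i - E.toFun (x i))) bc.e (bc.ι (star (x i))), mul_assoc, h2,
      ← mul_assoc]
  calc (1 : C) - bc.e = (1 - bc.e) * 1 * (1 - bc.e) := by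
        rw [mul_one, sub_mul, one_mul, mul_sub, mul_one, bc.e_idem]; abel
    _ = (1 - bc.e) * (∑ i, bc.ι (x i) * bc.e * bc.ι (star (x i))) * (1 - bc.e) := by
        rw [f_one E bc x hx]
    _ = ∑ i, (1 - bc.e) * (bc.ι (x i) * bc.e * bc.ι (star (x i))) * (1 - bc.e) := by
        rw [Finset.mul_sum, Finset.sum_mul]
    _ = _ := Finset.sum_congr rfl fun i _ => hterm i

lemma sum_yy {n : ℕ} (x : Fin n → B) (hx : IsQuasiBasis E x)
    (hidx : ∑ i, x i * star (x i) = (2 : B)) :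
    ∑ i, (x i - E.toFun (x i)) * star (x i - E.toFun (x i)) = 1 := by
  have h1 : ∑ i, x i * E.toFun (star (x i)) = 1 := by
    have h := hx.1 1
    simpa using h
  have h2 : ∑ i, E.toFun (x i) * star (x i) = 1 := by
    have h := congrArg star h1
    rw [star_sum, star_one] at h
    rw [← h]
    exact Finset.sum_congr rfl fun i _ => by rw [star_mul, ← E.star_map, star_star]
  have h3 : ∑ i, E.toFun (x i) * E.toFun (star (x i)) = 1 := by
    have h4 : ∀ i, E.toFun (x i) * E.toFun (star (x i)) = E.toFun (E.toFun (x i) * star (x i)) :=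
      fun i => (E.left_mod _ (E.mem_range _) _).symm
    rw [Finset.sum_congr rfl fun i _ => h4 i, ← map_sum, h2, E_one]
  have hterm : ∀ i, (x i - E.toFun (x i)) * star (x i - E.toFun (x i))
      = x i * star (x i) - x i * E.toFun (star (x i)) - E.toFun (x i) * star (x i)
        + E.toFun (x i) * E.toFun (star (x i)) := by
    intro i
    rw [star_sub, ← E.star_map, sub_mul, mul_sub, mul_sub]
    abel
  rw [Finset.sum_congr rfl fun i _ => hterm i]
  simp only [Finset.sum_add_distrib, Finset.sum_sub_distrib]
  rw [hidx, h1, h2, h3]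
  norm_num

lemma corner_rep [PartialOrder B] [StarOrderedRing B] (bc : BasicConstruction E C)
    (hA : IsClosed (A : Set B)) {n : ℕ} (x : Fin n → B) (hx : IsQuasiBasis E x)
    {y : C} (hy : bc.e * y * (1 - bc.e) = y) :
    ∃ b₀ : B, E.toFun b₀ = 0 ∧ y = bc.e * bc.ι b₀ := by
  have hq : (1 - bc.e) * (1 - bc.e) = (1 : C) - bc.e := by
    rw [sub_mul, one_mul, mul_sub, mul_one, bc.e_idem]; abel
  have hyq : y * (1 - bc.e) = y := by
    conv_lhs => rw [← hy]
    rw [mul_assoc (bc.e * y) (1 - bc.e) (1 - bc.e), hq, hy]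
  have hey : bc.e * y = y := by
    conv_lhs => rw [← hy]
    rw [← mul_assoc bc.e (bc.e * y) (1 - bc.e), ← mul_assoc bc.e bc.e y, bc.e_idem, hy]
  choose a hmem heq using fun i =>
    ece_mem E bc hA (y * bc.ι (x i - E.toFun (x i)))
  have hrep : y = bc.e * bc.ι (∑ i, a i * star (x i - E.toFun (x i))) := by
    have hterm : ∀ i, y * (bc.ι (x i - E.toFun (x i)) * bc.e
          * bc.ι (star (x i - E.toFun (x i))))
        = bc.e * bc.ι (a i * star (x i - E.toFun (x i))) := by
      intro i
      have h5 : y * (bc.ι (x i - E.toFun (x i)) * bc.e)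
          = bc.ι (a i) * bc.e := by
        conv_lhs => rw [← mul_assoc]
        rw [← hey, mul_assoc bc.e y (bc.ι (x i - E.toFun (x i)))]
        exact heq i
      rw [← mul_assoc, h5, ← e_comm E bc (hmem i), mul_assoc, ← map_mul]
    calc y = y * (1 - bc.e) := hyq.symm
      _ = ∑ i, y * (bc.ι (x i - E.toFun (x i)) * bc.e
            * bc.ι (star (x i - E.toFun (x i)))) := by
          rw [q_frame E bc x hx, Finset.mul_sum]
      _ = ∑ i, bc.e * bc.ι (a i * star (x i - E.toFun (x i))) :=
          Finset.sum_congr rfl fun i _ => hterm i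
      _ = bc.e * bc.ι (∑ i, a i * star (x i - E.toFun (x i))) := by
          rw [map_sum, Finset.mul_sum]
  set g := ∑ i, a i * star (x i - E.toFun (x i)) with hg
  have hye : y * bc.e = 0 := by
    rw [← hyq, mul_assoc, sub_mul, one_mul, bc.e_idem, sub_self, mul_zero]
  refine ⟨g - E.toFun g, by rw [map_sub, E_idem, sub_self], ?_⟩
  rw [map_sub, mul_sub, e_comm E bc (E.mem_range g), ← bc.jones g, ← hrep, hye, sub_zero]


set_option maxHeartbeats 1000000 in
lemma main_result [PartialOrder B] [StarOrderedRing B]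
    {n : ℕ} (x : Fin n → B) (hx : IsQuasiBasis E x)
    (hidx : ∑ i, x i * star (x i) = (2 : B))
    (bc : BasicConstruction E C)
    (Cn : C → Prop) (hCn : ∀ y, Cn y ↔ bc.e * y * (1 - bc.e) = y) :
    (∀ a ∈ A, ∀ y, Cn y → Cn (bc.ι a * y) ∧ Cn (y * bc.ι a)) ∧
    ∃ lin rin : C → C → B,
      (∀ y z, Cn y → Cn z → lin y z ∈ A ∧ bc.ι (lin y z) * bc.e = y * star z) ∧
      (∀ y z, Cn y → Cn z → rin y z ∈ A ∧ bc.ι (rin y z) * (1 - bc.e) = star y * z) ∧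
      (∀ y z, Cn y → Cn z → star (lin y z) = lin z y) ∧
      (∀ y z, Cn y → Cn z → star (rin y z) = rin z y) ∧
      (∀ y, Cn y → ∃ c : B, lin y y = star c * c) ∧
      (∀ y, Cn y → ∃ c : B, rin y y = star c * c) ∧
      (∀ y z w, Cn y → Cn z → Cn w →
        bc.ι (lin y z) * w = y * bc.ι (rin z w)) ∧
      ((Submodule.span ℂ {a : B | ∃ y z, Cn y ∧ Cn z ∧ a = lin y z}).topologicalClosure
          = Subalgebra.toSubmodule A.toSubalgebra) ∧
      ((Submodule.span ℂ {a : B | ∃ y z, Cn y ∧ Cn z ∧ a = rin y z}).topologicalClosure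
          = Subalgebra.toSubmodule A.toSubalgebra) := by
  classical
  have hA : IsClosed (A : Set B) := A_closed E bc
  have hXX : ∀ {b₀ c₀ : B}, E.toFun b₀ = 0 → E.toFun c₀ = 0 →
      E.toFun (b₀ * c₀) = b₀ * c₀ := fun hb hc => ker_mul_ker E bc x hx hidx hb hc
  constructor
  · -- bimodule property
    intro a ha y hy
    rw [hCn] at hy
    constructor
    · rw [hCn]
      calc bc.e * (bc.ι a * y) * (1 - bc.e) = bc.ι a * (bc.e * y * (1 - bc.e)) := by
            rw [← mul_assoc bc.e (bc.ι a) y, e_comm E bc ha]; simp only [mul_assoc]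
        _ = bc.ι a * y := by rw [hy]
    · rw [hCn]
      have hca : bc.ι a * (1 - bc.e) = (1 - bc.e) * bc.ι a := by
        rw [mul_sub, sub_mul, mul_one, one_mul, e_comm E bc ha]
      calc bc.e * (y * bc.ι a) * (1 - bc.e) = bc.e * (y * (bc.ι a * (1 - bc.e))) := by
            simp only [mul_assoc]
        _ = bc.e * (y * ((1 - bc.e) * bc.ι a)) := by rw [hca]
        _ = bc.e * y * (1 - bc.e) * bc.ι a := by simp only [mul_assoc]
        _ = y * bc.ι a := by rw [hy]
  -- inner products
  set rep : C → B := fun y =>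
    if h : ∃ b₀ : B, E.toFun b₀ = 0 ∧ y = bc.e * bc.ι b₀ then h.choose else 0 with hrepdef
  have hrep : ∀ y, Cn y → E.toFun (rep y) = 0 ∧ y = bc.e * bc.ι (rep y) := by
    intro y hy
    have hex := corner_rep E bc hA x hx ((hCn y).mp hy)
    simp only [hrepdef, dif_pos hex]
    exact hex.choose_spec
  have hrep_of : ∀ b₀ : B, E.toFun b₀ = 0 → rep (bc.e * bc.ι b₀) = b₀ := by
    intro b₀ hb
    have hex : ∃ b₁ : B, E.toFun b₁ = 0 ∧ bc.e * bc.ι b₀ = bc.e * bc.ι b₁ := ⟨b₀, hb, rfl⟩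
    simp only [hrepdef, dif_pos hex]
    obtain ⟨h1, h2⟩ := hex.choose_spec
    have h3 : bc.e * bc.ι (b₀ - hex.choose) = 0 := by rw [map_sub, mul_sub, ← h2, sub_self]
    exact (sub_eq_zero.mp (e_mul_inj E bc h3)).symm
  have hCn_rep : ∀ b₀ : B, E.toFun b₀ = 0 → Cn (bc.e * bc.ι b₀) := by
    intro b₀ hb
    rw [hCn, ← mul_assoc bc.e bc.e (bc.ι b₀), bc.e_idem, mul_sub, mul_one, bc.jones, hb,
      map_zero, zero_mul, sub_zero]
  refine ⟨fun y z => E.toFun (rep y * star (rep z)), fun y z => star (rep y) * rep z,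
    ?_, ?_, ?_, ?_, ?_, ?_, ?_, ?_, ?_⟩
  · -- lin properties
    intro y z hy hz
    obtain ⟨hby, hyr⟩ := hrep y hy
    obtain ⟨hbz, hzr⟩ := hrep z hz
    refine ⟨E.mem_range _, ?_⟩
    have h1 : y * star z = bc.e * bc.ι (rep y * star (rep z)) * bc.e := by
      conv_lhs => rw [hyr, hzr]
      rw [star_mul, bc.e_star, ← map_star, ← mul_assoc,
        mul_assoc bc.e (bc.ι (rep y)) (bc.ι (star (rep z))), ← map_mul]
    rw [h1, bc.jones]
  · -- rin properties
    intro y z hy hz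
    obtain ⟨hby, hyr⟩ := hrep y hy
    obtain ⟨hbz, hzr⟩ := hrep z hz
    constructor
    · show star (rep y) * rep z ∈ A
      rw [← hXX (E_ker_star E hby) hbz]
      exact E.mem_range _
    · show bc.ι (star (rep y) * rep z) * (1 - bc.e) = star y * z
      conv_rhs => rw [hyr, hzr]
      rw [star_mul, bc.e_star, ← map_star, mul_assoc, ← mul_assoc bc.e bc.e (bc.ι (rep z)),
        bc.e_idem, ← mul_assoc, key2 E bc x hx hidx (E_ker_star E hby) hbz]
  · -- star lin
    intro y z hy hz
    show star (E.toFun (rep y * star (rep z))) = E.toFun (rep z * star (rep y))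
    rw [← E.star_map, star_mul, star_star]
  · -- star rin
    intro y z hy hz
    show star (star (rep y) * rep z) = star (rep z) * rep y
    rw [star_mul, star_star]
  · -- lin positive
    intro y hy
    obtain ⟨c, hc⟩ := E.pos (star (rep y))
    rw [star_star] at hc
    exact ⟨c, hc⟩
  · -- rin positive
    intro y hy
    exact ⟨rep y, rfl⟩
  · -- imprimitivity
    intro y z w hy hz hw
    obtain ⟨hby, hyr⟩ := hrep y hy
    obtain ⟨hbz, hzr⟩ := hrep z hz
    obtain ⟨hbw, hwr⟩ := hrep w hw
    show bc.ι (E.toFun (rep y * star (rep z))) * w = y * bc.ι (star (rep z) * rep w)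
    have hmem : rep y * star (rep z) ∈ A := by
      rw [← hXX hby (E_ker_star E hbz)]; exact E.mem_range _
    rw [hXX hby (E_ker_star E hbz)]
    conv_lhs => rw [hwr]
    conv_rhs => rw [hyr]
    rw [← mul_assoc, ← e_comm E bc hmem, mul_assoc, ← map_mul,
      mul_assoc bc.e (bc.ι (rep y)) (bc.ι (star (rep z) * rep w)), ← map_mul,
      mul_assoc (rep y) (star (rep z)) (rep w)]
  · -- fullness of lin
    have hspan : Submodule.span ℂ {a : B | ∃ y z, Cn y ∧ Cn z ∧
        a = E.toFun (rep y * star (rep z))} = Subalgebra.toSubmodule A.toSubalgebra := by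
      apply le_antisymm
      · rw [Submodule.span_le]
        rintro a ⟨y, z, hy, hz, rfl⟩
        show E.toFun (rep y * star (rep z)) ∈ A.toSubalgebra
        exact E.mem_range _
      · intro a ha
        have haA : a ∈ A := ha
        have hEy : ∀ i, E.toFun (x i - E.toFun (x i)) = 0 := fun i => by
          rw [map_sub, E_idem, sub_self]
        have hEay : ∀ i, E.toFun (a * (x i - E.toFun (x i))) = 0 := fun i => by
          rw [E.left_mod a haA, hEy, mul_zero]
        have hsum : a = ∑ i, E.toFun (rep (bc.e * bc.ι (a * (x i - E.toFun (x i))))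
            * star (rep (bc.e * bc.ι (x i - E.toFun (x i))))) := by
          rw [Finset.sum_congr rfl fun i _ => by
            rw [hrep_of _ (hEay i), hrep_of _ (hEy i)]]
          rw [Finset.sum_congr rfl fun i _ =>
            congrArg E.toFun (mul_assoc a (x i - E.toFun (x i)) (star (x i - E.toFun (x i))))]
          rw [← map_sum, ← Finset.mul_sum, sum_yy E x hx hidx, mul_one, E.fixes a haA]
        rw [hsum]
        exact Submodule.sum_mem _ fun i _ => Submodule.subset_span
          ⟨_, _, hCn_rep _ (hEay i), hCn_rep _ (hEy i), rfl⟩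
    rw [hspan]
    exact IsClosed.submodule_topologicalClosure_eq hA
  · -- fullness of rin
    have hspan : Submodule.span ℂ {a : B | ∃ y z, Cn y ∧ Cn z ∧
        a = star (rep y) * rep z} = Subalgebra.toSubmodule A.toSubalgebra := by
      apply le_antisymm
      · rw [Submodule.span_le]
        rintro a ⟨y, z, hy, hz, rfl⟩
        obtain ⟨hby, -⟩ := hrep y hy
        obtain ⟨hbz, -⟩ := hrep z hz
        show star (rep y) * rep z ∈ A.toSubalgebra
        rw [← hXX (E_ker_star E hby) hbz]
        exact E.mem_range _
      · intro a ha
        have haA : a ∈ A := ha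
        have hEy : ∀ i, E.toFun (star (x i - E.toFun (x i))) = 0 := fun i =>
          E_ker_star E (by rw [map_sub, E_idem, sub_self])
        have hEya : ∀ i, E.toFun (star (x i - E.toFun (x i)) * a) = 0 := fun i => by
          rw [E.right_mod a haA, hEy, zero_mul]
        have hsum : a = ∑ i, star (rep (bc.e * bc.ι (star (x i - E.toFun (x i)))))
            * rep (bc.e * bc.ι (star (x i - E.toFun (x i)) * a)) := by
          rw [Finset.sum_congr rfl fun i _ => by
            rw [hrep_of _ (hEy i), hrep_of _ (hEya i), star_star]]
          rw [Finset.sum_congr rfl fun i _ =>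
            (mul_assoc (x i - E.toFun (x i)) (star (x i - E.toFun (x i))) a).symm]
          rw [← Finset.sum_mul, sum_yy E x hx hidx, one_mul]
        rw [hsum]
        exact Submodule.sum_mem _ fun i _ => Submodule.subset_span
          ⟨_, _, hCn_rep _ (hEy i), hCn_rep _ (hEya i), rfl⟩
    rw [hspan]
    exact IsClosed.submodule_topologicalClosure_eq hA


end CornerProof

/-- for Index E = 2, the corner `X_B = e_A C*⟨B,e_A⟩(1−e_A)` with the actions
`a·x·b = axb` and inner products `_A⟨x,y⟩ = ψ⁻¹(xy*)`, `⟨x,y⟩_A = φ⁻¹(x*y)`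
(`ψ(a) = a e_A`, `φ(a) = a(1−e_A)`) is an A-A-equivalence bimodule. -/
theorem corner_is_equivalence_bimodule
    {B C : Type*} [NormedRing B] [StarRing B] [CStarRing B] [NormedAlgebra ℂ B]
    [StarModule ℂ B] [CompleteSpace B]
    [NormedRing C] [StarRing C] [CStarRing C] [NormedAlgebra ℂ C]
    [StarModule ℂ C] [CompleteSpace C]
    {A : StarSubalgebra ℂ B} (E : CondExp B A)
    {n : ℕ} (x : Fin n → B) (hx : IsQuasiBasis E x)
    (hidx : ∑ i, x i * star (x i) = (2 : B))
    (bc : BasicConstruction E C)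
    (Et : C →ₗ[ℂ] B)
    (hEt : ∀ b c : B, Et (bc.ι b * bc.e * bc.ι c) = ((2 : ℂ))⁻¹ • (b * c))
    -- Cn x means x lies in the corner e_A C (1−e_A)
    (Cn : C → Prop) (hCn : ∀ y, Cn y ↔ bc.e * y * (1 - bc.e) = y) :
    -- the corner is an A-A-subbimodule of C
    (∀ a ∈ A, ∀ y, Cn y → Cn (bc.ι a * y) ∧ Cn (y * bc.ι a)) ∧
    -- and it carries A-valued inner products making it an equivalence bimodule:
    ∃ lin rin : C → C → B,
      (∀ y z, Cn y → Cn z → lin y z ∈ A ∧ bc.ι (lin y z) * bc.e = y * star z) ∧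
      (∀ y z, Cn y → Cn z → rin y z ∈ A ∧ bc.ι (rin y z) * (1 - bc.e) = star y * z) ∧
      (∀ y z, Cn y → Cn z → star (lin y z) = lin z y) ∧
      (∀ y z, Cn y → Cn z → star (rin y z) = rin z y) ∧
      (∀ y, Cn y → ∃ c : B, lin y y = star c * c) ∧
      (∀ y, Cn y → ∃ c : B, rin y y = star c * c) ∧
      -- imprimitivity: _A⟨x,y⟩·z = x·⟨y,z⟩_A
      (∀ y z w, Cn y → Cn z → Cn w →
        bc.ι (lin y z) * w = y * bc.ι (rin z w)) ∧
      -- fullness of both inner products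
      ((Submodule.span ℂ {a : B | ∃ y z, Cn y ∧ Cn z ∧ a = lin y z}).topologicalClosure
          = Subalgebra.toSubmodule A.toSubalgebra) ∧
      ((Submodule.span ℂ {a : B | ∃ y z, Cn y ∧ Cn z ∧ a = rin y z}).topologicalClosure
          = Subalgebra.toSubmodule A.toSubalgebra) := by
  letI instB : CStarAlgebra B :=
    { ‹NormedRing B›, ‹StarRing B›, ‹CStarRing B›, ‹NormedAlgebra ℂ B›, ‹StarModule ℂ B›,
      ‹CompleteSpace B› with }
  letI instC : CStarAlgebra C :=
    { ‹NormedRing C›, ‹StarRing C›, ‹CStarRing C›, ‹NormedAlgebra ℂ C›, ‹StarModule ℂ C›,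
      ‹CompleteSpace C› with }
  letI : PartialOrder B := CStarAlgebra.spectralOrder B
  haveI : StarOrderedRing B := CStarAlgebra.spectralOrderedRing B
  exact CornerProof.main_result E x hx hidx bc Cn hCn



end
end

section
/- With X_B = e_A C*⟨B, e_A⟩ (1−e_A) as above, the map x ↦ x^♯ := β̂(x*) defines an involution on X_B, making X_B an involutive A-A-equivalence bimodule: (x^♯)^♯ = x, (a·x·b)^♯ = b*·x^♯·a*, and _A⟨x, y^♯⟩ = ⟨x^♯, y⟩_A. -/
/- Watatani-style conditional expectations, quasi-bases, and the C*-basic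
construction, formalized abstractly. -/

noncomputable section

/-- `x^♯ := β̂(x*)` is an involution on the corner bimodule
`X_B = e_A C*⟨B,e_A⟩(1−e_A)`, making it an involutive A-A-equivalence bimodule. -/
theorem corner_involution
    {B C : Type*} [NormedRing B] [StarRing B] [CStarRing B] [NormedAlgebra ℂ B]
    [StarModule ℂ B] [CompleteSpace B]
    [NormedRing C] [StarRing C] [CStarRing C] [NormedAlgebra ℂ C]
    [StarModule ℂ C] [CompleteSpace C]
    {A : StarSubalgebra ℂ B} (E : CondExp B A)
    {n : ℕ} (x : Fin n → B) (hx : IsQuasiBasis E x)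
    (hidx : ∑ i, x i * star (x i) = (2 : B))
    (bc : BasicConstruction E C)
    (Et : C →ₗ[ℂ] B)
    (hEt : ∀ b c : B, Et (bc.ι b * bc.e * bc.ι c) = ((2 : ℂ))⁻¹ • (b * c))
    (Cn : C → Prop) (hCn : ∀ y, Cn y ↔ bc.e * y * (1 - bc.e) = y)
    -- the inner products of the bimodule X_B
    (lin rin : C → C → B)
    (hlin : ∀ y z, Cn y → Cn z → lin y z ∈ A ∧ bc.ι (lin y z) * bc.e = y * star z)
    (hrin : ∀ y z, Cn y → Cn z → rin y z ∈ A ∧ bc.ι (rin y z) * (1 - bc.e) = star y * z)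
    -- the dual automorphism β̂ of C*⟨B,e_A⟩
    (Φ : C ≃⋆ₐ[ℂ] C)
    (hΦB : ∀ b : B, Φ (bc.ι b) = bc.ι b)
    (hΦe : Φ bc.e = 1 - bc.e)
    (hΦ2 : ∀ y : C, Φ (Φ y) = y) :
    -- x ↦ β̂(x*) maps the corner into itself, conjugate-linearly
    (∀ y, Cn y → Cn (Φ (star y))) ∧
    (∀ (c : ℂ) (y : C), Φ (star (c • y)) = star c • Φ (star y)) ∧
    (∀ y z : C, Φ (star (y + z)) = Φ (star y) + Φ (star z)) ∧
    -- (x^♯)^♯ = x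
    (∀ y, Cn y → Φ (star (Φ (star y))) = y) ∧
    -- (a·x·b)^♯ = b*·x^♯·a*
    (∀ a ∈ A, ∀ b ∈ A, ∀ y, Cn y →
      Φ (star (bc.ι a * y * bc.ι b)) = bc.ι (star b) * Φ (star y) * bc.ι (star a)) ∧
    -- _A⟨x, y^♯⟩ = ⟨x^♯, y⟩_A
    (∀ y z, Cn y → Cn z → lin y (Φ (star z)) = rin (Φ (star y)) z) := by
  have hΦ1e : Φ (1 - bc.e) = bc.e := by
    rw [map_sub, map_one, hΦe]; abel
  have hs : ∀ w : C, star (Φ (star w)) = Φ w := by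
    intro w; rw [map_star, star_star]
  have hCn' : ∀ y, Cn y → Cn (Φ (star y)) := by
    intro y hy
    rw [hCn] at hy ⊢
    have h : Φ (star y) = bc.e * Φ (star y) * (1 - bc.e) := by
      conv_lhs => rw [← hy]
      simp only [star_mul, star_sub, star_one, bc.e_star, map_mul, hΦe, hΦ1e, mul_assoc]
    exact h.symm
  refine ⟨hCn', ?_, ?_, ?_, ?_, ?_⟩
  · intro c y; rw [star_smul, map_smul]
  · intro y z; rw [star_add, map_add]
  · intro y _
    rw [← map_star Φ, star_star, hΦ2]
  · intro a _ b _ y _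
    have h : star (bc.ι a * y * bc.ι b) = bc.ι (star b) * star y * bc.ι (star a) := by
      simp [star_mul, mul_assoc, map_star]
    rw [h, map_mul, map_mul, hΦB, hΦB]
  · intro y z hy hz
    have h1 := hlin y (Φ (star z)) hy (hCn' z hz)
    have h2 := hrin (Φ (star y)) z (hCn' y hy) hz
    have key : bc.ι (lin y (Φ (star z))) * bc.e = bc.ι (rin (Φ (star y)) z) * bc.e := by
      rw [h1.2, hs]
      have h3 := congrArg Φ h2.2
      rw [map_mul, map_mul, hΦB, hΦ1e, hs, hΦ2] at h3
      exact h3.symm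
    have h4 : bc.ι (lin y (Φ (star z)) - rin (Φ (star y)) z) * bc.e = 0 := by
      rw [map_sub, sub_mul, key, sub_self]
    exact sub_eq_zero.mp (bc.mul_e_inj _ h4)

end
end

section
/- Let X be an involutive A-A-equivalence bimodule and L its linking algebra acting on X ⊕ A. Then B_X = { [[a, x],[(x^♯)~, a]] : a ∈ A, x ∈ X } is a C*-subalgebra of L containing A (embedded diagonally), and the map E_X([[a,x],[(x^♯)~,a]]) = diag(a,a) is a conditional expectation of B_X onto A. -/
noncomputable section

/-- An A-A-equivalence bimodule (imprimitivity bimodule) structure on `X`. -/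
structure EqvBimod (A : Type*) [NormedRing A] [StarRing A] [NormedAlgebra ℂ A]
    (X : Type*) [NormedAddCommGroup X] [NormedSpace ℂ X] [CompleteSpace X] where
  ls : A → X →ₗ[ℂ] X          -- left action  a · x
  rs : A → X →ₗ[ℂ] X          -- right action x · a
  ls_one : ∀ x, ls 1 x = x
  ls_mul : ∀ a b x, ls (a * b) x = ls a (ls b x)
  ls_add : ∀ a b x, ls (a + b) x = ls a x + ls b x
  rs_one : ∀ x, rs 1 x = x
  rs_mul : ∀ a b x, rs (a * b) x = rs b (rs a x)
  rs_add : ∀ a b x, rs (a + b) x = rs a x + rs b x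
  ls_rs : ∀ a b x, ls a (rs b x) = rs b (ls a x)
  linn : X → X → A            -- left inner product  _A⟨x, y⟩
  rinn : X → X → A            -- right inner product ⟨x, y⟩_A
  linn_add_left : ∀ x y z, linn (x + y) z = linn x z + linn y z
  linn_smul_left : ∀ (c : ℂ) x y, linn (c • x) y = c • linn x y
  linn_star : ∀ x y, star (linn x y) = linn y x
  linn_ls : ∀ a x y, linn (ls a x) y = a * linn x y
  rinn_add_right : ∀ x y z, rinn x (y + z) = rinn x y + rinn x z
  rinn_smul_right : ∀ (c : ℂ) x y, rinn x (c • y) = c • rinn x y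
  rinn_star : ∀ x y, star (rinn x y) = rinn y x
  rinn_rs : ∀ a x y, rinn x (rs a y) = rinn x y * a
  compat : ∀ x y z, ls (linn x y) z = rs (rinn y z) x
  lpos : ∀ x, ∃ a, linn x x = star a * a
  rpos : ∀ x, ∃ a, rinn x x = star a * a
  lfull : (Submodule.span ℂ {a : A | ∃ x y, a = linn x y}).topologicalClosure = ⊤
  rfull : (Submodule.span ℂ {a : A | ∃ x y, a = rinn x y}).topologicalClosure = ⊤
  norm_inn : ∀ x, ‖x‖ ^ 2 = ‖rinn x x‖

/-- An involutive A-A-equivalence bimodule: an equivalence bimodule together with a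
conjugate-linear involution `x ↦ x^♯` satisfying `(x^♯)^♯ = x`,
`(a·x·b)^♯ = b*·x^♯·a*`, and `_A⟨x, y^♯⟩ = ⟨x^♯, y⟩_A`. -/
structure InvBimod (A : Type*) [NormedRing A] [StarRing A] [NormedAlgebra ℂ A]
    (X : Type*) [NormedAddCommGroup X] [NormedSpace ℂ X] [CompleteSpace X]
    extends EqvBimod A X where
  sh : X → X
  sh_add : ∀ x y, sh (x + y) = sh x + sh y
  sh_smul : ∀ (c : ℂ) x, sh (c • x) = star c • sh x
  sh_sh : ∀ x, sh (sh x) = x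
  sh_ls : ∀ a x, sh (ls a x) = rs (star a) (sh x)
  sh_rs : ∀ a x, sh (rs a x) = ls (star a) (sh x)
  sh_inn : ∀ x y, linn x (sh y) = rinn (sh x) y

/-- inside the linking algebra `L` of an involutive A-A-equivalence
bimodule `X`, the set `B_X = {[[a,x],[(x^♯)~,a]]}` is a C*-subalgebra of `L` containing
`A` (diagonally), and `[[a,x],[(x^♯)~,a]] ↦ diag(a,a)` is a conditional expectation
`E_X : B_X → A`. -/
theorem linking_subalgebra_and_expectation
    {A X L : Type*} [NormedRing A] [StarRing A] [CStarRing A] [NormedAlgebra ℂ A]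
    [StarModule ℂ A] [CompleteSpace A]
    [NormedAddCommGroup X] [NormedSpace ℂ X] [CompleteSpace X]
    [NormedRing L] [StarRing L] [CStarRing L] [NormedAlgebra ℂ L]
    [StarModule ℂ L] [CompleteSpace L]
    (M : InvBimod A X)
    -- the linking algebra L of X: corner embeddings ι₁, ι₂ of A and j of X
    (ι₁ ι₂ : A →ₗ[ℂ] L) (j : X →ₗ[ℂ] L)
    (hι₁m : ∀ a b, ι₁ (a * b) = ι₁ a * ι₁ b)
    (hι₂m : ∀ a b, ι₂ (a * b) = ι₂ a * ι₂ b)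
    (hι₁s : ∀ a, star (ι₁ a) = ι₁ (star a))
    (hι₂s : ∀ a, star (ι₂ a) = ι₂ (star a))
    (hι₁inj : Function.Injective ι₁) (hι₂inj : Function.Injective ι₂)
    (hjinj : Function.Injective j)
    (horth : ∀ a b, ι₁ a * ι₂ b = 0)
    (horth' : ∀ a b, ι₂ a * ι₁ b = 0)
    (hone : ι₁ 1 + ι₂ 1 = 1)
    (hjl : ∀ a x, j (M.ls a x) = ι₁ a * j x)
    (hjr : ∀ a x, j (M.rs a x) = j x * ι₂ a)
    (hjj : ∀ x y, j x * star (j y) = ι₁ (M.linn x y))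
    (hjj' : ∀ x y, star (j x) * j y = ι₂ (M.rinn x y))
    (hjz : ∀ x y, j x * j y = 0)
    (hj12 : ∀ a x, ι₂ a * j x = 0)
    (hj21 : ∀ a x, j x * ι₁ a = 0)
    -- L is the linking algebra: every element decomposes as a 2×2 matrix
    (hgen : ∀ l : L, ∃ a b x y, l = ι₁ a + ι₂ b + j x + star (j y))
    (hdec : ∀ a b x y, ι₁ a + ι₂ b + j x + star (j y) = 0 →
      a = 0 ∧ b = 0 ∧ x = 0 ∧ y = 0)
    -- B_X as a subset of L
    (BX : Set L)
    (hBX : BX = {l : L | ∃ a x, l = ι₁ a + ι₂ a + j x + star (j (M.sh x))}) :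
    -- B_X is a C*-subalgebra of L containing the diagonal copy of A
    (1 : L) ∈ BX ∧
    (∀ a : A, ι₁ a + ι₂ a ∈ BX) ∧
    (∀ p ∈ BX, ∀ q ∈ BX, p + q ∈ BX) ∧
    (∀ (c : ℂ), ∀ p ∈ BX, c • p ∈ BX) ∧
    (∀ p ∈ BX, star p ∈ BX) ∧
    (∀ p ∈ BX, ∀ q ∈ BX, p * q ∈ BX) ∧
    IsClosed BX ∧
    -- E_X is well defined and is a conditional expectation onto A
    (∃ EX : L →ₗ[ℂ] L,
      (∀ a x, EX (ι₁ a + ι₂ a + j x + star (j (M.sh x))) = ι₁ a + ι₂ a) ∧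
      (∀ p ∈ BX, EX (EX p) = EX p) ∧
      (∀ a : A, ∀ p ∈ BX, EX ((ι₁ a + ι₂ a) * p) = (ι₁ a + ι₂ a) * EX p) ∧
      (∀ a : A, ∀ p ∈ BX, EX (p * (ι₁ a + ι₂ a)) = EX p * (ι₁ a + ι₂ a)) ∧
      (∀ p ∈ BX, EX (star p) = star (EX p)) ∧
      (∀ p ∈ BX, ∃ c : L, EX (star p * p) = star c * c)) := by
  classical
  letI : CStarAlgebra A := ⟨⟩
  letI : CStarAlgebra L := ⟨⟩
  -- basic facts about the involution
  have sh0 : M.sh 0 = 0 := by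
    have h := M.sh_smul 0 0
    simpa using h
  have shneg : ∀ x, M.sh (-x) = -M.sh x := by
    intro x
    have h := M.sh_smul (-1) x
    simpa using h
  have shsub : ∀ x y, M.sh (x - y) = M.sh x - M.sh y := by
    intro x y
    rw [sub_eq_add_neg, M.sh_add, shneg, sub_eq_add_neg]
  -- rewriting star through the corner embeddings
  have hι₁eq : ∀ a, ι₁ a = star (ι₁ (star a)) := fun a => by rw [hι₁s, star_star]
  have hι₂eq : ∀ a, ι₂ a = star (ι₂ (star a)) := fun a => by rw [hι₂s, star_star]
  -- multiplication table
  have m11 : ∀ a b, ι₁ a * ι₁ b = ι₁ (a * b) := fun a b => (hι₁m a b).symm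
  have m22 : ∀ a b, ι₂ a * ι₂ b = ι₂ (a * b) := fun a b => (hι₂m a b).symm
  have m1j : ∀ a x, ι₁ a * j x = j (M.ls a x) := fun a x => (hjl a x).symm
  have mj2 : ∀ a x, j x * ι₂ a = j (M.rs a x) := fun a x => (hjr a x).symm
  have m1sj : ∀ (a : A) y, ι₁ a * star (j y) = 0 := by
    intro a y
    rw [hι₁eq a, ← star_mul, hj21, star_zero]
  have msj1 : ∀ (a : A) y, star (j y) * ι₁ a = star (j (M.ls (star a) y)) := by
    intro a y
    conv_lhs => rw [hι₁eq a]
    rw [← star_mul, ← hjl]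
  have m2sj : ∀ (a : A) y, ι₂ a * star (j y) = star (j (M.rs (star a) y)) := by
    intro a y
    conv_lhs => rw [hι₂eq a]
    rw [← star_mul, ← hjr]
  have msj2 : ∀ (a : A) y, star (j y) * ι₂ a = 0 := by
    intro a y
    rw [hι₂eq a, ← star_mul, hj12, star_zero]
  have msjsj : ∀ x y, star (j x) * star (j y) = 0 := by
    intro x y
    rw [← star_mul, hjz, star_zero]
  have se₁ : star (ι₁ (1 : A)) = ι₁ 1 := by rw [hι₁s, star_one]
  have se₂ : star (ι₂ (1 : A)) = ι₂ 1 := by rw [hι₂s, star_one]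
  -- membership in BX
  have memBX : ∀ l, l ∈ BX ↔ ∃ a x, l = ι₁ a + ι₂ a + j x + star (j (M.sh x)) := by
    intro l; rw [hBX]; exact Iff.rfl
  -- the product of two generic elements of BX
  have genmul : ∀ a x b y,
      (ι₁ a + ι₂ a + j x + star (j (M.sh x))) * (ι₁ b + ι₂ b + j y + star (j (M.sh y))) =
      ι₁ (a * b + M.linn x (M.sh y)) + ι₂ (a * b + M.linn x (M.sh y)) +
        j (M.ls a y + M.rs b x) + star (j (M.sh (M.ls a y + M.rs b x))) := by
    intro a x b y
    have hsh : M.sh (M.ls a y + M.rs b x) = M.rs (star a) (M.sh y) + M.ls (star b) (M.sh x) := by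
      rw [M.sh_add, M.sh_ls, M.sh_rs]
    rw [hsh]
    simp only [add_mul, mul_add, m11, m22, m1j, mj2, hj21, hj12, m1sj, msj1, m2sj, msj2,
      hjj, hjj', hjz, msjsj, horth, horth', map_add, star_add, add_zero, zero_add]
    rw [M.sh_inn x y]
    abel
  have genstar : ∀ a x, star (ι₁ a + ι₂ a + j x + star (j (M.sh x))) =
      ι₁ (star a) + ι₂ (star a) + j (M.sh x) + star (j (M.sh (M.sh x))) := by
    intro a x
    rw [M.sh_sh]
    simp only [star_add, hι₁s, hι₂s, star_star]
    abel
  -- the conditional expectation as a linear map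
  set EXmap : L →ₗ[ℂ] L :=
    { toFun := fun l => ι₁ 1 * l * ι₁ 1 + ι₂ 1 * l * ι₂ 1
      map_add' := by intro u v; simp only [mul_add, add_mul]; abel
      map_smul' := by
        intro c u
        simp only [mul_smul_comm, smul_mul_assoc, smul_add, RingHom.id_apply] } with hEXmap
  have EXapply : ∀ l, EXmap l = ι₁ 1 * l * ι₁ 1 + ι₂ 1 * l * ι₂ 1 := fun l => rfl
  have EXgen : ∀ a x, EXmap (ι₁ a + ι₂ a + j x + star (j (M.sh x))) = ι₁ a + ι₂ a := by
    intro a x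
    rw [EXapply]
    simp only [add_mul, mul_add, m11, m22, m1j, mj2, hj21, hj12, m1sj, msj1, m2sj, msj2,
      horth, horth', one_mul, mul_one, star_one, M.ls_one, M.rs_one, zero_mul, mul_zero,
      add_zero, zero_add]
  have EXstar : ∀ l, EXmap (star l) = star (EXmap l) := by
    intro l
    rw [EXapply, EXapply]
    simp only [star_add, star_mul, se₁, se₂, mul_assoc]
  have EXmodl : ∀ (a : A) (l : L), EXmap ((ι₁ a + ι₂ a) * l) = (ι₁ a + ι₂ a) * EXmap l := by
    intro a l
    rw [EXapply, EXapply]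
    simp only [add_mul, mul_add, ← mul_assoc, m11, m22, horth, horth', one_mul, mul_one,
      zero_mul, mul_zero, add_zero, zero_add]
  have EXmodr : ∀ (a : A) (l : L), EXmap (l * (ι₁ a + ι₂ a)) = EXmap l * (ι₁ a + ι₂ a) := by
    intro a l
    calc EXmap (l * (ι₁ a + ι₂ a)) = star (star (EXmap (l * (ι₁ a + ι₂ a)))) := (star_star _).symm
      _ = star (EXmap (star (l * (ι₁ a + ι₂ a)))) := by rw [EXstar]
      _ = star (EXmap ((ι₁ (star a) + ι₂ (star a)) * star l)) := by
            rw [star_mul, star_add, hι₁s, hι₂s]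
      _ = star ((ι₁ (star a) + ι₂ (star a)) * EXmap (star l)) := by rw [EXmodl]
      _ = star (EXmap (star l)) * star (ι₁ (star a) + ι₂ (star a)) := by rw [star_mul]
      _ = EXmap l * (ι₁ a + ι₂ a) := by
            simp only [← EXstar, star_star, star_add, hι₁s, hι₂s]
  have EXdiag : ∀ a : A, EXmap (ι₁ a + ι₂ a) = ι₁ a + ι₂ a := by
    intro a
    have h0 : ι₁ a + ι₂ a + j 0 + star (j (M.sh 0)) = ι₁ a + ι₂ a := by
      rw [sh0]; simp only [map_zero, star_zero, add_zero]
    calc EXmap (ι₁ a + ι₂ a) = EXmap (ι₁ a + ι₂ a + j 0 + star (j (M.sh 0))) := by rw [h0]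
      _ = ι₁ a + ι₂ a := EXgen a 0
  -- isometry of the corner embeddings
  have iso1 : ∀ a, ‖ι₁ a‖ = ‖a‖ := by
    let φ : A →⋆ₙₐ[ℂ] L :=
      { toFun := ι₁, map_add' := ι₁.map_add, map_smul' := ι₁.map_smul,
        map_zero' := ι₁.map_zero, map_mul' := hι₁m, map_star' := fun a => (hι₁s a).symm }
    exact fun a => NonUnitalStarAlgHom.norm_map φ hι₁inj a
  have iso2 : ∀ a, ‖ι₂ a‖ = ‖a‖ := by
    let φ : A →⋆ₙₐ[ℂ] L :=
      { toFun := ι₂, map_add' := ι₂.map_add, map_smul' := ι₂.map_smul,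
        map_zero' := ι₂.map_zero, map_mul' := hι₂m, map_star' := fun a => (hι₂s a).symm }
    exact fun a => NonUnitalStarAlgHom.norm_map φ hι₂inj a
  have sq_norm_eq : ∀ {s t : ℝ}, 0 ≤ s → 0 ≤ t → s ^ 2 = t ^ 2 → s = t := by
    intro s t hs ht h
    nlinarith [sq_nonneg (s - t), sq_nonneg (s + t)]
  have isoj : ∀ x, ‖j x‖ = ‖x‖ := by
    intro x
    refine sq_norm_eq (norm_nonneg _) (norm_nonneg _) ?_
    calc ‖j x‖ ^ 2 = ‖star (j x) * j x‖ := by rw [CStarRing.norm_star_mul_self, sq]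
      _ = ‖M.rinn x x‖ := by rw [hjj', iso2]
      _ = ‖x‖ ^ 2 := (M.norm_inn x).symm
  have isojsh : ∀ x, ‖j (M.sh x)‖ = ‖x‖ := by
    intro x
    have hls : M.linn (M.sh x) (M.sh x) = M.rinn x x := by
      have h := M.sh_inn (M.sh x) x
      rwa [M.sh_sh] at h
    refine sq_norm_eq (norm_nonneg _) (norm_nonneg _) ?_
    calc ‖j (M.sh x)‖ ^ 2 = ‖j (M.sh x) * star (j (M.sh x))‖ := by
          rw [CStarRing.norm_self_mul_star, sq]
      _ = ‖M.rinn x x‖ := by rw [hjj, hls, iso1]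
      _ = ‖x‖ ^ 2 := (M.norm_inn x).symm
  -- closedness of BX
  have hclosed : IsClosed BX := by
    set F : A × X → L := fun p => ι₁ p.1 + ι₂ p.1 + j p.2 + star (j (M.sh p.2)) with hF
    have hrange : BX = Set.range F := by
      rw [hBX]
      ext l
      constructor
      · rintro ⟨a, x, rfl⟩; exact ⟨(a, x), rfl⟩
      · rintro ⟨⟨a, x⟩, rfl⟩; exact ⟨a, x, rfl⟩
    have Fsub : ∀ u v, F u - F v = F (u - v) := by
      intro u v
      simp only [hF, Prod.fst_sub, Prod.snd_sub, map_sub, shsub, star_sub]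
      abel
    have hkey : ∀ (a : A) (x : X), max ‖a‖ ‖x‖ ≤ ‖ι₁ a + ι₂ a + j x + star (j (M.sh x))‖ := by
      intro a x
      rcases subsingleton_or_nontrivial A with hA | hA
      · have ha : a = 0 := Subsingleton.elim _ _
        have hx : ‖x‖ = 0 := by
          have h2 : ‖x‖ ^ 2 = ‖M.rinn x x‖ := M.norm_inn x
          have : M.rinn x x = 0 := Subsingleton.elim _ _
          rw [this, norm_zero, pow_eq_zero_iff (two_ne_zero)] at h2
          exact h2
        simp [ha, hx]
      · have he₁ : ‖ι₁ (1 : A)‖ ≤ 1 := by rw [iso1]; exact le_of_eq norm_one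
        have he₂ : ‖ι₂ (1 : A)‖ ≤ 1 := by rw [iso2]; exact le_of_eq norm_one
        set p := ι₁ a + ι₂ a + j x + star (j (M.sh x)) with hp
        have cA : ι₁ 1 * p * ι₁ 1 = ι₁ a := by
          rw [hp]
          simp only [add_mul, mul_add, m11, m22, m1j, mj2, hj21, hj12, m1sj, msj1, m2sj, msj2,
            horth, horth', one_mul, mul_one, star_one, M.ls_one, M.rs_one, zero_mul, mul_zero,
            add_zero, zero_add]
        have cX : ι₁ 1 * p * ι₂ 1 = j x := by
          rw [hp]
          simp only [add_mul, mul_add, m11, m22, m1j, mj2, hj21, hj12, m1sj, msj1, m2sj, msj2,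
            horth, horth', one_mul, mul_one, star_one, M.ls_one, M.rs_one, zero_mul, mul_zero,
            add_zero, zero_add]
        have bound : ∀ (u v w : L), ‖u‖ ≤ 1 → ‖v‖ ≤ 1 → ‖u * w * v‖ ≤ ‖w‖ := by
          intro u v w hu hv
          calc ‖u * w * v‖ ≤ ‖u * w‖ * ‖v‖ := norm_mul_le _ _
            _ ≤ ‖u‖ * ‖w‖ * ‖v‖ := by
                have := norm_mul_le u w
                exact mul_le_mul_of_nonneg_right this (norm_nonneg _)
            _ ≤ 1 * ‖w‖ * 1 := by
                have h1 : ‖u‖ * ‖w‖ ≤ 1 * ‖w‖ :=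
                  mul_le_mul_of_nonneg_right hu (norm_nonneg _)
                calc ‖u‖ * ‖w‖ * ‖v‖ ≤ ‖u‖ * ‖w‖ * 1 :=
                      mul_le_mul_of_nonneg_left hv (mul_nonneg (norm_nonneg _) (norm_nonneg _))
                  _ ≤ 1 * ‖w‖ * 1 := by
                      exact mul_le_mul_of_nonneg_right h1 (by norm_num)
            _ = ‖w‖ := by ring
        have hna : ‖a‖ ≤ ‖p‖ := by
          rw [← iso1 a, ← cA]
          exact bound _ _ _ he₁ he₁
        have hnx : ‖x‖ ≤ ‖p‖ := by
          rw [← isoj x, ← cX]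
          exact bound _ _ _ he₁ he₂
        exact max_le hna hnx
    have hanti : AntilipschitzWith 1 F := by
      refine AntilipschitzWith.of_le_mul_dist ?_
      intro u v
      rw [NNReal.coe_one, one_mul, dist_eq_norm, dist_eq_norm, Fsub]
      have : ‖u - v‖ = max ‖(u - v).1‖ ‖(u - v).2‖ := rfl
      rw [this]
      exact hkey (u - v).1 (u - v).2
    have hlip : LipschitzWith 4 F := by
      refine LipschitzWith.of_dist_le_mul ?_
      intro u v
      rw [dist_eq_norm, dist_eq_norm, Fsub]
      have hub : ∀ (a : A) (x : X),
          ‖ι₁ a + ι₂ a + j x + star (j (M.sh x))‖ ≤ 4 * max ‖a‖ ‖x‖ := by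
        intro a x
        calc ‖ι₁ a + ι₂ a + j x + star (j (M.sh x))‖
            ≤ ‖ι₁ a + ι₂ a + j x‖ + ‖star (j (M.sh x))‖ := norm_add_le _ _
          _ ≤ (‖ι₁ a + ι₂ a‖ + ‖j x‖) + ‖star (j (M.sh x))‖ := by
              gcongr; exact norm_add_le _ _
          _ ≤ ((‖ι₁ a‖ + ‖ι₂ a‖) + ‖j x‖) + ‖star (j (M.sh x))‖ := by
              gcongr; exact norm_add_le _ _
          _ = ‖a‖ + ‖a‖ + ‖x‖ + ‖x‖ := by
              rw [iso1, iso2, isoj, norm_star, isojsh]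
          _ ≤ max ‖a‖ ‖x‖ + max ‖a‖ ‖x‖ + max ‖a‖ ‖x‖ + max ‖a‖ ‖x‖ := by
              gcongr <;> simp [le_max_left, le_max_right]
          _ = 4 * max ‖a‖ ‖x‖ := by ring
      have h := hub (u - v).1 (u - v).2
      have hn : ‖u - v‖ = max ‖(u - v).1‖ ‖(u - v).2‖ := rfl
      rw [hn]
      exact h
    rw [hrange]
    exact hanti.isClosed_range hlip.uniformContinuous
  -- spectral order for positivity
  letI := CStarAlgebra.spectralOrder A
  haveI := CStarAlgebra.spectralOrderedRing A
  refine ⟨?_, ?_, ?_, ?_, ?_, ?_, hclosed, ?_⟩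
  · -- 1 ∈ BX
    rw [memBX]
    refine ⟨1, 0, ?_⟩
    rw [sh0]
    simp only [map_zero, star_zero, add_zero]
    exact hone.symm
  · -- diagonal
    intro a
    rw [memBX]
    refine ⟨a, 0, ?_⟩
    rw [sh0]
    simp only [map_zero, star_zero, add_zero]
  · -- addition
    intro p hp q hq
    rw [memBX] at hp hq ⊢
    obtain ⟨a, x, rfl⟩ := hp
    obtain ⟨b, y, rfl⟩ := hq
    refine ⟨a + b, x + y, ?_⟩
    simp only [map_add, M.sh_add, star_add]
    abel
  · -- scalar multiplication
    intro c p hp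
    rw [memBX] at hp ⊢
    obtain ⟨a, x, rfl⟩ := hp
    refine ⟨c • a, c • x, ?_⟩
    simp only [map_smul, M.sh_smul, star_smul, star_star, smul_add]
  · -- star
    intro p hp
    rw [memBX] at hp ⊢
    obtain ⟨a, x, rfl⟩ := hp
    exact ⟨star a, M.sh x, genstar a x⟩
  · -- multiplication
    intro p hp q hq
    rw [memBX] at hp hq ⊢
    obtain ⟨a, x, rfl⟩ := hp
    obtain ⟨b, y, rfl⟩ := hq
    exact ⟨a * b + M.linn x (M.sh y), M.ls a y + M.rs b x, genmul a x b y⟩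
  · -- the conditional expectation
    refine ⟨EXmap, EXgen, ?_, ?_, ?_, ?_, ?_⟩
    · intro p hp
      rw [memBX] at hp
      obtain ⟨a, x, rfl⟩ := hp
      rw [EXgen, EXdiag]
    · intro a p _
      exact EXmodl a p
    · intro a p _
      exact EXmodr a p
    · intro p _
      exact EXstar p
    · intro p hp
      rw [memBX] at hp
      obtain ⟨a, x, rfl⟩ := hp
      have hr : M.linn (M.sh x) (M.sh x) = M.rinn x x := by
        have h := M.sh_inn (M.sh x) x
        rwa [M.sh_sh] at h
      obtain ⟨e, he⟩ := M.rpos x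
      have hrpos : (0 : A) ≤ star a * a + M.rinn x x := by
        rw [he]
        exact add_nonneg (star_mul_self_nonneg a) (star_mul_self_nonneg e)
      set b := CFC.sqrt (star a * a + M.rinn x x) with hbdef
      have hb : star b * b = star a * a + M.rinn x x := by
        rw [hbdef, (IsSelfAdjoint.of_nonneg (CFC.sqrt_nonneg _)).star_eq,
          CFC.sqrt_mul_sqrt_self _ hrpos]
      refine ⟨ι₁ b + ι₂ b, ?_⟩
      rw [genstar, genmul, EXgen]
      have hrc : star (ι₁ b + ι₂ b) * (ι₁ b + ι₂ b) = ι₁ (star b * b) + ι₂ (star b * b) := by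
        simp only [star_add, hι₁s, hι₂s, add_mul, mul_add, m11, m22, horth, horth',
          add_zero, zero_add]
      rw [hrc, hb, hr]

end
end

section
/- With B_X and E_X as above, E_X has Watatani index 2: if z_i, y_i ∈ X satisfy Σ ⟨z_i, y_i⟩_A = 1 and w_i = z_i^♯, then {(1,1)} ∪ {([[0, w_i],[(w_i^♯)~, 0]], [[0, y_i],[(y_i^♯)~, 0]])} is a quasi-basis for E_X and Index E_X = 2·1. -/
noncomputable section

/-- the conditional expectation `E_X : B_X → A` has Watatani index 2:
if `Σ ⟨z_i, y_i⟩_A = 1` and `w_i = z_i^♯`, then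
`{(1,1)} ∪ {(W_i, Y_i)}` with `W_i = [[0,w_i],[(w_i^♯)~,0]]`, `Y_i = [[0,y_i],[(y_i^♯)~,0]]`
is a quasi-basis for `E_X` and `Index E_X = 2`. -/
theorem linking_expectation_index_two
    {A X L : Type*} [NormedRing A] [StarRing A] [CStarRing A] [NormedAlgebra ℂ A]
    [StarModule ℂ A] [CompleteSpace A]
    [NormedAddCommGroup X] [NormedSpace ℂ X] [CompleteSpace X]
    [NormedRing L] [StarRing L] [CStarRing L] [NormedAlgebra ℂ L]
    [StarModule ℂ L] [CompleteSpace L]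
    (M : InvBimod A X)
    -- the linking algebra L of X: corner embeddings ι₁, ι₂ of A and j of X
    (ι₁ ι₂ : A →ₗ[ℂ] L) (j : X →ₗ[ℂ] L)
    (hι₁m : ∀ a b, ι₁ (a * b) = ι₁ a * ι₁ b)
    (hι₂m : ∀ a b, ι₂ (a * b) = ι₂ a * ι₂ b)
    (hι₁s : ∀ a, star (ι₁ a) = ι₁ (star a))
    (hι₂s : ∀ a, star (ι₂ a) = ι₂ (star a))
    (hι₁inj : Function.Injective ι₁) (hι₂inj : Function.Injective ι₂)
    (hjinj : Function.Injective j)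
    (horth : ∀ a b, ι₁ a * ι₂ b = 0)
    (horth' : ∀ a b, ι₂ a * ι₁ b = 0)
    (hone : ι₁ 1 + ι₂ 1 = 1)
    (hjl : ∀ a x, j (M.ls a x) = ι₁ a * j x)
    (hjr : ∀ a x, j (M.rs a x) = j x * ι₂ a)
    (hjj : ∀ x y, j x * star (j y) = ι₁ (M.linn x y))
    (hjj' : ∀ x y, star (j x) * j y = ι₂ (M.rinn x y))
    (hjz : ∀ x y, j x * j y = 0)
    (hj12 : ∀ a x, ι₂ a * j x = 0)
    (hj21 : ∀ a x, j x * ι₁ a = 0)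
    -- L is the linking algebra: every element decomposes as a 2×2 matrix
    (hgen : ∀ l : L, ∃ a b x y, l = ι₁ a + ι₂ b + j x + star (j y))
    (hdec : ∀ a b x y, ι₁ a + ι₂ b + j x + star (j y) = 0 →
      a = 0 ∧ b = 0 ∧ x = 0 ∧ y = 0)
    -- the conditional expectation E_X
    (EX : L →ₗ[ℂ] L)
    (hEX : ∀ a x, EX (ι₁ a + ι₂ a + j x + star (j (M.sh x))) = ι₁ a + ι₂ a)
    -- elements with Σ ⟨z_i, y_i⟩_A = 1, and w_i = z_i^♯
    {n : ℕ} (z y : Fin n → X) (hzy : ∑ i, M.rinn (z i) (y i) = 1)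
    (w : Fin n → X) (hw : ∀ i, w i = M.sh (z i))
    (W Y : Fin n → L)
    (hWdef : ∀ i, W i = j (w i) + star (j (M.sh (w i))))
    (hYdef : ∀ i, Y i = j (y i) + star (j (M.sh (y i)))) :
    -- quasi-basis property for E_X on B_X
    (∀ a x, (ι₁ a + ι₂ a + j x + star (j (M.sh x))) =
      EX (ι₁ a + ι₂ a + j x + star (j (M.sh x))) * 1 +
      ∑ i, EX ((ι₁ a + ι₂ a + j x + star (j (M.sh x))) * W i) * Y i) ∧
    (∀ a x, (ι₁ a + ι₂ a + j x + star (j (M.sh x))) =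
      1 * EX (ι₁ a + ι₂ a + j x + star (j (M.sh x))) +
      ∑ i, W i * EX (Y i * (ι₁ a + ι₂ a + j x + star (j (M.sh x))))) ∧
    -- Index E_X = 2
    (1 : L) * 1 + ∑ i, W i * Y i = 2 := by
  -- basic product rules
  have e2 : ∀ (a : A) (t : X), ι₁ a * star (j t) = 0 := by
    intro a t
    calc ι₁ a * star (j t) = star (j t * ι₁ (star a)) := by
          rw [star_mul, hι₁s, star_star]
      _ = 0 := by rw [hj21, star_zero]
  have e3 : ∀ (a : A) (t : X), ι₂ a * star (j t) = star (j (M.rs (star a) t)) := by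
    intro a t
    calc ι₂ a * star (j t) = star (j t * ι₂ (star a)) := by
          rw [star_mul, hι₂s, star_star]
      _ = star (j (M.rs (star a) t)) := by rw [hjr]
  have e4 : ∀ (a : A) (t : X), star (j t) * ι₁ a = star (j (M.ls (star a) t)) := by
    intro a t
    calc star (j t) * ι₁ a = star (ι₁ (star a) * j t) := by
          rw [star_mul, hι₁s, star_star]
      _ = star (j (M.ls (star a) t)) := by rw [hjl]
  have e5 : ∀ (a : A) (t : X), star (j t) * ι₂ a = 0 := by
    intro a t
    calc star (j t) * ι₂ a = star (ι₂ (star a) * j t) := by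
          rw [star_mul, hι₂s, star_star]
      _ = 0 := by rw [hj12, star_zero]
  have e6 : ∀ (s t : X), star (j s) * star (j t) = 0 := by
    intro s t
    rw [← star_mul, hjz, star_zero]
  -- zero / sum lemmas
  have hsh0 : M.sh 0 = 0 := by
    have h := M.sh_smul 0 0
    simpa using h
  have hls0 : ∀ t, M.ls (0 : A) t = 0 := by
    intro t
    have h := M.ls_add 0 0 t
    rw [add_zero] at h
    exact left_eq_add.mp h
  have hrs0 : ∀ t, M.rs (0 : A) t = 0 := by
    intro t
    have h := M.rs_add 0 0 t
    rw [add_zero] at h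
    exact left_eq_add.mp h
  have hrs_sum : ∀ (f : Fin n → A) (t : X),
      M.rs (∑ i, f i) t = ∑ i, M.rs (f i) t := by
    intro f t
    let g : A →+ X :=
      { toFun := fun a => M.rs a t
        map_zero' := hrs0 t
        map_add' := fun a b => M.rs_add a b t }
    exact map_sum g f Finset.univ
  have hls_sum : ∀ (f : Fin n → A) (t : X),
      M.ls (∑ i, f i) t = ∑ i, M.ls (f i) t := by
    intro f t
    let g : A →+ X :=
      { toFun := fun a => M.ls a t
        map_zero' := hls0 t
        map_add' := fun a b => M.ls_add a b t }
    exact map_sum g f Finset.univ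
  have hsh_sum : ∀ (f : Fin n → X), M.sh (∑ i, f i) = ∑ i, M.sh (f i) := by
    intro f
    let g : X →+ X :=
      { toFun := M.sh
        map_zero' := hsh0
        map_add' := M.sh_add }
    exact map_sum g f Finset.univ
  -- key product formulas
  have key : ∀ (a : A) (x s : X),
      (ι₁ a + ι₂ a + j x + star (j (M.sh x))) * (j s + star (j (M.sh s))) =
        ι₁ (M.rinn (M.sh x) s) + ι₂ (M.rinn (M.sh x) s) + j (M.ls a s) +
          star (j (M.sh (M.ls a s))) := by
    intro a x s
    have A1 : ι₁ a * j s = j (M.ls a s) := (hjl a s).symm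
    have A2 : ι₁ a * star (j (M.sh s)) = 0 := e2 a (M.sh s)
    have A3 : ι₂ a * j s = 0 := hj12 a s
    have A4 : ι₂ a * star (j (M.sh s)) = star (j (M.sh (M.ls a s))) := by
      rw [M.sh_ls]; exact e3 a (M.sh s)
    have A5 : j x * j s = 0 := hjz x s
    have A6 : j x * star (j (M.sh s)) = ι₁ (M.rinn (M.sh x) s) := by
      rw [hjj, M.sh_inn]
    have A7 : star (j (M.sh x)) * j s = ι₂ (M.rinn (M.sh x) s) := hjj' _ _
    have A8 : star (j (M.sh x)) * star (j (M.sh s)) = 0 := e6 _ _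
    simp only [mul_add, add_mul]
    rw [A1, A2, A3, A4, A5, A6, A7, A8]
    abel
  have key2 : ∀ (a : A) (x s : X),
      (j s + star (j (M.sh s))) * (ι₁ a + ι₂ a + j x + star (j (M.sh x))) =
        ι₁ (M.rinn (M.sh s) x) + ι₂ (M.rinn (M.sh s) x) + j (M.rs a s) +
          star (j (M.sh (M.rs a s))) := by
    intro a x s
    have B1 : j s * ι₁ a = 0 := hj21 a s
    have B2 : j s * ι₂ a = j (M.rs a s) := (hjr a s).symm
    have B3 : j s * j x = 0 := hjz s x
    have B4 : j s * star (j (M.sh x)) = ι₁ (M.rinn (M.sh s) x) := by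
      rw [hjj, M.sh_inn]
    have B5 : star (j (M.sh s)) * ι₁ a = star (j (M.sh (M.rs a s))) := by
      rw [M.sh_rs]; exact e4 a (M.sh s)
    have B6 : star (j (M.sh s)) * ι₂ a = 0 := e5 a (M.sh s)
    have B7 : star (j (M.sh s)) * j x = ι₂ (M.rinn (M.sh s) x) := hjj' _ _
    have B8 : star (j (M.sh s)) * star (j (M.sh x)) = 0 := e6 _ _
    simp only [mul_add, add_mul]
    rw [B1, B2, B3, B4, B5, B6, B7, B8]
    abel
  have key3 : ∀ (c : A) (s : X),
      (ι₁ c + ι₂ c) * (j s + star (j (M.sh s))) =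
        j (M.ls c s) + star (j (M.sh (M.ls c s))) := by
    intro c s
    have A1 : ι₁ c * j s = j (M.ls c s) := (hjl c s).symm
    have A2 : ι₁ c * star (j (M.sh s)) = 0 := e2 c (M.sh s)
    have A3 : ι₂ c * j s = 0 := hj12 c s
    have A4 : ι₂ c * star (j (M.sh s)) = star (j (M.sh (M.ls c s))) := by
      rw [M.sh_ls]; exact e3 c (M.sh s)
    simp only [mul_add, add_mul]
    rw [A1, A2, A3, A4]
    abel
  have key4 : ∀ (c : A) (s : X),
      (j s + star (j (M.sh s))) * (ι₁ c + ι₂ c) =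
        j (M.rs c s) + star (j (M.sh (M.rs c s))) := by
    intro c s
    have B1 : j s * ι₁ c = 0 := hj21 c s
    have B2 : j s * ι₂ c = j (M.rs c s) := (hjr c s).symm
    have B5 : star (j (M.sh s)) * ι₁ c = star (j (M.sh (M.rs c s))) := by
      rw [M.sh_rs]; exact e4 c (M.sh s)
    have B6 : star (j (M.sh s)) * ι₂ c = 0 := e5 c (M.sh s)
    simp only [mul_add, add_mul]
    rw [B1, B2, B5, B6]
    abel
  have key5 : ∀ (s t : X),
      (j s + star (j (M.sh s))) * (j t + star (j (M.sh t))) =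
        ι₁ (M.rinn (M.sh s) t) + ι₂ (M.rinn (M.sh s) t) := by
    intro s t
    have C1 : j s * j t = 0 := hjz s t
    have C2 : j s * star (j (M.sh t)) = ι₁ (M.rinn (M.sh s) t) := by
      rw [hjj, M.sh_inn]
    have C3 : star (j (M.sh s)) * j t = ι₂ (M.rinn (M.sh s) t) := hjj' _ _
    have C4 : star (j (M.sh s)) * star (j (M.sh t)) = 0 := e6 _ _
    simp only [mul_add, add_mul]
    rw [C1, C2, C3, C4]
    abel
  refine ⟨?_, ?_, ?_⟩
  · intro a x
    have hterm : ∀ i, EX ((ι₁ a + ι₂ a + j x + star (j (M.sh x))) * W i) * Y i =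
        j (M.ls (M.linn x (z i)) (y i)) +
          star (j (M.sh (M.ls (M.linn x (z i)) (y i)))) := by
      intro i
      have hc : M.rinn (M.sh x) (w i) = M.linn x (z i) := by
        rw [hw i, ← M.sh_inn, M.sh_sh]
      rw [hWdef, hYdef, key a x (w i), hEX, key3, hc]
    have hx : ∑ i, M.ls (M.linn x (z i)) (y i) = x := by
      have h : ∀ i, M.ls (M.linn x (z i)) (y i) = M.rs (M.rinn (z i) (y i)) x :=
        fun i => M.compat x (z i) (y i)
      calc ∑ i, M.ls (M.linn x (z i)) (y i)
          = ∑ i, M.rs (M.rinn (z i) (y i)) x := Finset.sum_congr rfl fun i _ => h i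
        _ = M.rs (∑ i, M.rinn (z i) (y i)) x := (hrs_sum _ _).symm
        _ = x := by rw [hzy, M.rs_one]
    have hsum : ∑ i, EX ((ι₁ a + ι₂ a + j x + star (j (M.sh x))) * W i) * Y i =
        j x + star (j (M.sh x)) := by
      calc ∑ i, EX ((ι₁ a + ι₂ a + j x + star (j (M.sh x))) * W i) * Y i
          = ∑ i, (j (M.ls (M.linn x (z i)) (y i)) +
              star (j (M.sh (M.ls (M.linn x (z i)) (y i))))) :=
            Finset.sum_congr rfl fun i _ => hterm i
        _ = (∑ i, j (M.ls (M.linn x (z i)) (y i))) +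
            ∑ i, star (j (M.sh (M.ls (M.linn x (z i)) (y i)))) :=
            Finset.sum_add_distrib
        _ = j (∑ i, M.ls (M.linn x (z i)) (y i)) +
            star (j (M.sh (∑ i, M.ls (M.linn x (z i)) (y i)))) := by
            rw [← map_sum, ← star_sum, ← map_sum, ← hsh_sum]
        _ = j x + star (j (M.sh x)) := by rw [hx]
    rw [hEX, hsum, mul_one]
    abel
  · intro a x
    have hterm : ∀ i, W i * EX (Y i * (ι₁ a + ι₂ a + j x + star (j (M.sh x)))) =
        j (M.rs (M.rinn (M.sh (y i)) x) (w i)) +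
          star (j (M.sh (M.rs (M.rinn (M.sh (y i)) x) (w i)))) := by
      intro i
      rw [hYdef, key2 a x (y i), hEX, hWdef, key4]
    have hx : ∑ i, M.rs (M.rinn (M.sh (y i)) x) (w i) = x := by
      have h : ∀ i, M.rs (M.rinn (M.sh (y i)) x) (w i) =
          M.ls (M.rinn (z i) (y i)) x := by
        intro i
        have h1 : M.linn (M.sh (z i)) (M.sh (y i)) = M.rinn (z i) (y i) := by
          rw [M.sh_inn, M.sh_sh]
        rw [hw i, ← M.compat (M.sh (z i)) (M.sh (y i)) x, h1]
      calc ∑ i, M.rs (M.rinn (M.sh (y i)) x) (w i)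
          = ∑ i, M.ls (M.rinn (z i) (y i)) x := Finset.sum_congr rfl fun i _ => h i
        _ = M.ls (∑ i, M.rinn (z i) (y i)) x := (hls_sum _ _).symm
        _ = x := by rw [hzy, M.ls_one]
    have hsum : ∑ i, W i * EX (Y i * (ι₁ a + ι₂ a + j x + star (j (M.sh x)))) =
        j x + star (j (M.sh x)) := by
      calc ∑ i, W i * EX (Y i * (ι₁ a + ι₂ a + j x + star (j (M.sh x))))
          = ∑ i, (j (M.rs (M.rinn (M.sh (y i)) x) (w i)) +
              star (j (M.sh (M.rs (M.rinn (M.sh (y i)) x) (w i))))) :=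
            Finset.sum_congr rfl fun i _ => hterm i
        _ = (∑ i, j (M.rs (M.rinn (M.sh (y i)) x) (w i))) +
            ∑ i, star (j (M.sh (M.rs (M.rinn (M.sh (y i)) x) (w i)))) :=
            Finset.sum_add_distrib
        _ = j (∑ i, M.rs (M.rinn (M.sh (y i)) x) (w i)) +
            star (j (M.sh (∑ i, M.rs (M.rinn (M.sh (y i)) x) (w i)))) := by
            rw [← map_sum, ← star_sum, ← map_sum, ← hsh_sum]
        _ = j x + star (j (M.sh x)) := by rw [hx]
    rw [hEX, hsum, one_mul]
    abel
  · have hterm : ∀ i, W i * Y i = ι₁ (M.rinn (z i) (y i)) + ι₂ (M.rinn (z i) (y i)) := by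
      intro i
      have hs : M.sh (w i) = z i := by rw [hw i, M.sh_sh]
      rw [hWdef, hYdef, key5, hs]
    have hsum : ∑ i, W i * Y i = 1 := by
      calc ∑ i, W i * Y i
          = ∑ i, (ι₁ (M.rinn (z i) (y i)) + ι₂ (M.rinn (z i) (y i))) :=
            Finset.sum_congr rfl fun i _ => hterm i
        _ = ι₁ (∑ i, M.rinn (z i) (y i)) + ι₂ (∑ i, M.rinn (z i) (y i)) := by
            rw [map_sum, map_sum, Finset.sum_add_distrib]
        _ = 1 := by rw [hzy]; exact hone
    rw [hsum, one_mul, one_add_one_eq_two]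

end
end

section
/- Let X be an involutive A-A-equivalence bimodule and e = diag(1,0) in the linking algebra L. Then e b e = E_X(b) e for all b ∈ B_X, the map a ↦ diag(a,0) is injective on A, and L is the C*-basic construction of the inclusion A ⊂ B_X with respect to E_X. -/
noncomputable section

/-- with `e = diag(1,0)` in the linking algebra `L`, one has
`e b e = E_X(b) e` for all `b ∈ B_X`, the map `a ↦ diag(a,0)` is injective, and `L`
is the C*-basic construction of `A ⊂ B_X` with respect to `E_X` (it is generated by
`B_X` and the Jones projection `e`). -/
theorem linking_is_basic_construction
    {A X L : Type*} [NormedRing A] [StarRing A] [CStarRing A] [NormedAlgebra ℂ A]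
    [StarModule ℂ A] [CompleteSpace A]
    [NormedAddCommGroup X] [NormedSpace ℂ X] [CompleteSpace X]
    [NormedRing L] [StarRing L] [CStarRing L] [NormedAlgebra ℂ L]
    [StarModule ℂ L] [CompleteSpace L]
    (M : InvBimod A X)
    -- the linking algebra L of X: corner embeddings ι₁, ι₂ of A and j of X
    (ι₁ ι₂ : A →ₗ[ℂ] L) (j : X →ₗ[ℂ] L)
    (hι₁m : ∀ a b, ι₁ (a * b) = ι₁ a * ι₁ b)
    (hι₂m : ∀ a b, ι₂ (a * b) = ι₂ a * ι₂ b)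
    (hι₁s : ∀ a, star (ι₁ a) = ι₁ (star a))
    (hι₂s : ∀ a, star (ι₂ a) = ι₂ (star a))
    (hι₁inj : Function.Injective ι₁) (hι₂inj : Function.Injective ι₂)
    (hjinj : Function.Injective j)
    (horth : ∀ a b, ι₁ a * ι₂ b = 0)
    (horth' : ∀ a b, ι₂ a * ι₁ b = 0)
    (hone : ι₁ 1 + ι₂ 1 = 1)
    (hjl : ∀ a x, j (M.ls a x) = ι₁ a * j x)
    (hjr : ∀ a x, j (M.rs a x) = j x * ι₂ a)
    (hjj : ∀ x y, j x * star (j y) = ι₁ (M.linn x y))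
    (hjj' : ∀ x y, star (j x) * j y = ι₂ (M.rinn x y))
    (hjz : ∀ x y, j x * j y = 0)
    (hj12 : ∀ a x, ι₂ a * j x = 0)
    (hj21 : ∀ a x, j x * ι₁ a = 0)
    -- L is the linking algebra: every element decomposes as a 2×2 matrix
    (hgen : ∀ l : L, ∃ a b x y, l = ι₁ a + ι₂ b + j x + star (j y))
    (hdec : ∀ a b x y, ι₁ a + ι₂ b + j x + star (j y) = 0 →
      a = 0 ∧ b = 0 ∧ x = 0 ∧ y = 0)
    (EX : L →ₗ[ℂ] L)
    (hEX : ∀ a x, EX (ι₁ a + ι₂ a + j x + star (j (M.sh x))) = ι₁ a + ι₂ a)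
    (BX : Set L)
    (hBX : BX = {l : L | ∃ a x, l = ι₁ a + ι₂ a + j x + star (j (M.sh x))})
    (e : L) (he : e = ι₁ 1) :
    -- e is a projection
    star e = e ∧ e * e = e ∧
    -- e b e = E_X(b) e for b ∈ B_X
    (∀ b ∈ BX, e * b * e = EX b * e) ∧
    -- a ↦ diag(a,0) = (ι₁ a + ι₂ a) e is injective
    Function.Injective (fun a : A => (ι₁ a + ι₂ a) * e) ∧
    -- L is generated by B_X and e: it is the C*-basic construction of A ⊂ B_X
    (Submodule.span ℂ {l : L | ∃ b₁ ∈ BX, ∃ b₂ ∈ BX, l = b₁ * e * b₂}).topologicalClosure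
      = ⊤ := by
  subst hBX he
  -- basic identities
  have star_e : star (ι₁ 1) = ι₁ 1 := by rw [hι₁s, star_one]
  have ee : ι₁ 1 * ι₁ 1 = ι₁ 1 := by rw [← hι₁m, one_mul]
  have sh0 : M.sh 0 = 0 := by
    have h := M.sh_smul 0 0
    simpa using h
  have i1e : ∀ a, ι₁ a * ι₁ 1 = ι₁ a := fun a => by rw [← hι₁m, mul_one]
  have ei1 : ∀ a, ι₁ 1 * ι₁ a = ι₁ a := fun a => by rw [← hι₁m, one_mul]
  have ej : ∀ x, ι₁ 1 * j x = j x := fun x => by rw [← hjl, M.ls_one]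
  have sje : ∀ x, star (j x) * ι₁ 1 = star (j x) := fun x => by
    rw [← star_e, ← star_mul, ej]
  have esj : ∀ x, ι₁ 1 * star (j x) = 0 := fun x => by
    rw [← star_e, ← star_mul, hj21, star_zero]
  have hι₁sj : ∀ a w, ι₁ a * star (j w) = 0 := fun a w => by
    have h : ι₁ a * star (j w) = star (j w * star (ι₁ a)) := by
      rw [star_mul, star_star]
    rw [h, hι₁s, hj21, star_zero]
  have hsji1 : ∀ z b, star (j z) * ι₁ b = star (j (M.ls (star b) z)) := fun z b => by
    have h : star (j z) * ι₁ b = star (star (ι₁ b) * j z) := by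
      rw [star_mul, star_star]
    rw [h, hι₁s, ← hjl]
  have hsji2 : ∀ z b, star (j z) * ι₂ b = 0 := fun z b => by
    have h : star (j z) * ι₂ b = star (star (ι₂ b) * j z) := by
      rw [star_mul, star_star]
    rw [h, hι₂s, hj12, star_zero]
  have hsjsj : ∀ z w, star (j z) * star (j w) = 0 := fun z w => by
    rw [← star_mul, hjz, star_zero]
  have ls0 : ∀ y : X, M.ls 0 y = 0 := fun y => by
    have h := M.ls_add 0 0 y
    rw [add_zero] at h
    rwa [right_eq_add] at h
  have rinn0r : ∀ x : X, M.rinn x 0 = 0 := fun x => by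
    have h := M.rinn_smul_right 0 x 0
    simpa using h
  have rinn0l : ∀ x : X, M.rinn 0 x = 0 := fun x => by
    rw [← M.rinn_star, rinn0r, star_zero]
  -- the key computation: b₁ e b₂
  have key : ∀ a b x y,
      (ι₁ a + ι₂ a + j x + star (j (M.sh x))) * ι₁ 1 *
        (ι₁ b + ι₂ b + j y + star (j (M.sh y))) =
      ι₁ (a * b) + ι₂ (M.rinn (M.sh x) y) + j (M.ls a y) +
        star (j (M.ls (star b) (M.sh x))) := by
    intro a b x y
    have h1 : (ι₁ a + ι₂ a + j x + star (j (M.sh x))) * ι₁ 1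
        = ι₁ a + star (j (M.sh x)) := by
      rw [add_mul, add_mul, add_mul, i1e, horth', hj21, sje, add_zero, add_zero]
    rw [h1]
    rw [mul_add, mul_add, mul_add, add_mul, add_mul, add_mul, add_mul]
    rw [← hι₁m, horth, ← hjl, hι₁sj, hsji1, hsji2, hjj', hsjsj]
    abel
  refine ⟨star_e, ee, ?_, ?_, ?_⟩
  · -- e b e = EX b * e
    rintro b ⟨a, x, rfl⟩
    have hb : ι₁ 1 * (ι₁ a + ι₂ a + j x + star (j (M.sh x))) = ι₁ a + j x := by
      rw [mul_add, mul_add, mul_add, ei1, horth, ej, esj, add_zero, add_zero]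
    rw [hb, hEX]
    simp only [add_mul, i1e, hj21, horth', add_zero]
  · -- injectivity
    intro a a' h
    simp only [add_mul, i1e, horth', add_zero] at h
    exact hι₁inj h
  · -- density
    set T : Set L := {l : L | ∃ b₁ ∈ {l : L | ∃ a x, l = ι₁ a + ι₂ a + j x +
        star (j (M.sh x))}, ∃ b₂ ∈ {l : L | ∃ a x, l = ι₁ a + ι₂ a + j x +
        star (j (M.sh x))}, l = b₁ * ι₁ 1 * b₂} with hT
    have mem_T : ∀ a b x y, ι₁ (a * b) + ι₂ (M.rinn (M.sh x) y) + j (M.ls a y) +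
        star (j (M.ls (star b) (M.sh x))) ∈ T := by
      intro a b x y
      exact ⟨_, ⟨a, x, rfl⟩, _, ⟨b, y, rfl⟩, (key a b x y).symm⟩
    have h1 : ∀ a, ι₁ a ∈ T := by
      intro a
      have h := mem_T a 1 0 0
      simpa [sh0, rinn0r, ls0] using h
    have h2 : ∀ x, j x ∈ T := by
      intro x
      have h := mem_T 1 0 0 x
      simpa [sh0, rinn0l, ls0, M.ls_one] using h
    have h3 : ∀ y, star (j y) ∈ T := by
      intro y
      have h := mem_T 0 1 (M.sh y) 0
      simpa [M.sh_sh, rinn0r, ls0, M.ls_one] using h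
    have h4 : ∀ z y, ι₂ (M.rinn z y) ∈ T := by
      intro z y
      have h := mem_T 0 0 (M.sh z) y
      simpa [M.sh_sh, ls0] using h
    -- continuity of ι₂
    letI : CStarAlgebra A := { }
    letI : CStarAlgebra L := { }
    let φ : A →⋆ₙₐ[ℂ] L :=
      { toFun := ι₂
        map_smul' := ι₂.map_smul
        map_zero' := ι₂.map_zero
        map_add' := ι₂.map_add
        map_mul' := hι₂m
        map_star' := fun a => (hι₂s a).symm }
    have hcont : Continuous ι₂ := by
      refine AddMonoidHomClass.continuous_of_bound ι₂ 1 fun a => ?_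
      rw [one_mul]
      exact NonUnitalStarAlgHom.norm_apply_le φ a
    rw [eq_top_iff]
    intro l _
    obtain ⟨a, b, x, y, rfl⟩ := hgen l
    have hsub : Submodule.span ℂ T ≤ (Submodule.span ℂ T).topologicalClosure :=
      Submodule.le_topologicalClosure _
    refine add_mem (add_mem (add_mem ?_ ?_) ?_) ?_
    · exact hsub (Submodule.subset_span (h1 a))
    · -- ι₂ b via density of inner products
      have hb : b ∈ (Submodule.span ℂ {a : A | ∃ x y, a = M.rinn x y}).topologicalClosure := by
        rw [M.rfull]; trivial
      have hb' : b ∈ closure (Submodule.span ℂ {a : A | ∃ x y, a = M.rinn x y} : Set A) := hb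
      have himg : ι₂ '' (Submodule.span ℂ {a : A | ∃ x y, a = M.rinn x y} : Set A) ⊆
          (Submodule.span ℂ T : Set L) := by
        rintro _ ⟨d, hd, rfl⟩
        have : ι₂ d ∈ Submodule.map ι₂ (Submodule.span ℂ {a : A | ∃ x y, a = M.rinn x y}) :=
          Submodule.mem_map_of_mem hd
        rw [Submodule.map_span] at this
        refine Submodule.span_mono ?_ this
        rintro _ ⟨_, ⟨z, w, rfl⟩, rfl⟩
        exact h4 z w
      have : ι₂ b ∈ closure (Submodule.span ℂ T : Set L) := by
        have h5 : ι₂ b ∈ closure (ι₂ '' (Submodule.span ℂ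
            {a : A | ∃ x y, a = M.rinn x y} : Set A)) :=
          image_closure_subset_closure_image hcont ⟨b, hb', rfl⟩
        exact closure_mono himg h5
      exact this
    · exact hsub (Submodule.subset_span (h2 x))
    · exact hsub (Submodule.subset_span (h3 y))

end
end

section
/- Let E : B → A have Index E = 2 and let B₋ = { b ∈ B : E(b) = 0 } = { b ∈ B : β(b) = −b }. Then B₋, with the A-A-bimodule structure inherited from B, inner products _A⟨x,y⟩ = E(xy*), ⟨x,y⟩_A = E(x*y), and involution x^♯ = x*, is an involutive A-A-equivalence bimodule, and B₋ is isomorphic to X_B = e_A C*⟨B,e_A⟩(1−e_A) as involutive A-A-equivalence bimodules. -/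
set_option linter.unusedSectionVars false
set_option linter.unusedVariables false
set_option maxHeartbeats 1000000


/- Watatani-style conditional expectations, quasi-bases, and the C*-basic
construction, formalized abstractly. -/

noncomputable section

section Aux

variable {B C : Type*} [NormedRing B] [StarRing B] [CStarRing B] [NormedAlgebra ℂ B]
    [StarModule ℂ B] [CompleteSpace B]
    [NormedRing C] [StarRing C] [CStarRing C] [NormedAlgebra ℂ C]
    [StarModule ℂ C] [CompleteSpace C]
    {A : StarSubalgebra ℂ B} {E : CondExp B A}
    {n : ℕ} {x : Fin n → B} {bc : BasicConstruction E C}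

/-- right-assoc jones -/
lemma aux_jones' (b : B) (t : C) :
    bc.e * (bc.ι b * (bc.e * t)) = bc.ι (E.toFun b) * (bc.e * t) := by
  have h := congrArg (· * t) (bc.jones b)
  simpa [mul_assoc] using h

lemma aux_jones'' (b : B) : bc.e * (bc.ι b * bc.e) = bc.ι (E.toFun b) * bc.e := by
  simpa [mul_assoc] using bc.jones b

/-- The quasi-basis index element is 1 in the basic construction. -/
lemma aux_z (hx : IsQuasiBasis E x) :
    ∑ i, bc.ι (x i) * bc.e * bc.ι (star (x i)) = 1 := by
  set z := ∑ i, bc.ι (x i) * bc.e * bc.ι (star (x i)) with hzdef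
  let S : Submodule ℂ C :=
    { carrier := {y | z * y = y}
      add_mem' := fun {a b} ha hb => by
        simp only [Set.mem_setOf_eq] at *
        rw [mul_add, ha, hb]
      zero_mem' := by simp
      smul_mem' := fun c {y} hy => by
        simp only [Set.mem_setOf_eq] at *
        rw [mul_smul_comm, hy] }
  have hSclosed : IsClosed (S : Set C) :=
    isClosed_eq (continuous_mul_left z) continuous_id
  have hgen : {y : C | ∃ b c : B, y = bc.ι b * bc.e * bc.ι c} ⊆ S := by
    rintro _ ⟨b, c, rfl⟩
    show z * _ = _
    rw [hzdef, Finset.sum_mul]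
    have hterm : ∀ i, bc.ι (x i) * bc.e * bc.ι (star (x i)) * (bc.ι b * bc.e * bc.ι c)
        = bc.ι (x i * E.toFun (star (x i) * b)) * bc.e * bc.ι c := by
      intro i
      have h1 : bc.ι (x i) * bc.e * bc.ι (star (x i)) * (bc.ι b * bc.e * bc.ι c)
          = bc.ι (x i) * (bc.e * (bc.ι (star (x i) * b) * (bc.e * bc.ι c))) := by
        simp [map_mul, mul_assoc]
      rw [h1, aux_jones']
      simp [map_mul, mul_assoc]
    rw [Finset.sum_congr rfl fun i _ => hterm i]
    rw [← Finset.sum_mul, ← Finset.sum_mul, ← map_sum, hx.1 b]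
  have hle : Submodule.span ℂ {y : C | ∃ b c : B, y = bc.ι b * bc.e * bc.ι c} ≤ S :=
    Submodule.span_le.mpr hgen
  have htop : (⊤ : Submodule ℂ C) ≤ S := by
    rw [← bc.dense]
    exact Submodule.topologicalClosure_minimal _ hle hSclosed
  have h1 : z * 1 = 1 := htop (Submodule.mem_top (x := (1 : C)))
  simpa using h1

/-- e commutes with ι a for a ∈ A. -/
lemma aux_comm (hx : IsQuasiBasis E x) : ∀ a ∈ A, bc.e * bc.ι a = bc.ι a * bc.e := by
  intro a ha
  have hz := aux_z (bc := bc) hx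
  have h1 : bc.e * bc.ι a = bc.e * bc.ι a * (∑ i, bc.ι (x i) * bc.e * bc.ι (star (x i))) := by
    rw [hz, mul_one]
  rw [Finset.mul_sum] at h1
  have hterm : ∀ i, bc.e * bc.ι a * (bc.ι (x i) * bc.e * bc.ι (star (x i)))
      = bc.ι a * (bc.ι (E.toFun (x i)) * bc.e * bc.ι (star (x i))) := by
    intro i
    have h2 : bc.e * bc.ι a * (bc.ι (x i) * bc.e * bc.ι (star (x i)))
        = bc.e * (bc.ι (a * x i) * bc.e) * bc.ι (star (x i)) := by
      simp [map_mul, mul_assoc]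
    rw [h2, aux_jones'', E.left_mod a ha (x i), map_mul]
    simp [mul_assoc]
  rw [Finset.sum_congr rfl fun i _ => hterm i, ← Finset.mul_sum] at h1
  have hterm2 : ∀ i, bc.ι (E.toFun (x i)) * bc.e * bc.ι (star (x i))
      = bc.e * (bc.ι (x i) * bc.e * bc.ι (star (x i))) := by
    intro i
    rw [← bc.jones (x i)]
    simp [mul_assoc]
  have h3 : (∑ i, bc.ι (E.toFun (x i)) * bc.e * bc.ι (star (x i)))
      = bc.e * (∑ i, bc.ι (x i) * bc.e * bc.ι (star (x i))) := by
    rw [Finset.mul_sum]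
    exact Finset.sum_congr rfl fun i _ => hterm2 i
  rw [h3, hz, mul_one] at h1
  exact h1

end Aux

section Aux2
variable {B C : Type*} [NormedRing B] [StarRing B] [CStarRing B] [NormedAlgebra ℂ B]
    [StarModule ℂ B] [CompleteSpace B]
    [NormedRing C] [StarRing C] [CStarRing C] [NormedAlgebra ℂ C]
    [StarModule ℂ C] [CompleteSpace C]
    {A : StarSubalgebra ℂ B} {E : CondExp B A}
    {n : ℕ} {x : Fin n → B} {bc : BasicConstruction E C}

/-- for r with E r = 0, (1-e) ι r (1-e) = 0, via Φ -/
lemma aux_fbot (Φ : C ≃⋆ₐ[ℂ] C) (hΦB : ∀ b : B, Φ (bc.ι b) = bc.ι b)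
    (hΦe : Φ bc.e = 1 - bc.e) (r : B) (hr : E.toFun r = 0) :
    (1 - bc.e) * bc.ι r * (1 - bc.e) = 0 := by
  have h0 : bc.e * bc.ι r * bc.e = 0 := by
    rw [bc.jones, hr]; simp
  have h1 := congrArg Φ h0
  rw [map_mul, map_mul, hΦB, hΦe, map_zero] at h1
  exact h1

/-- split: ι r = e ι r + ι r e for r ∈ B₋ -/
lemma aux_split (Φ : C ≃⋆ₐ[ℂ] C) (hΦB : ∀ b : B, Φ (bc.ι b) = bc.ι b)
    (hΦe : Φ bc.e = 1 - bc.e) (r : B) (hr : E.toFun r = 0) :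
    bc.ι r = bc.e * bc.ι r + bc.ι r * bc.e := by
  have h0 : bc.e * bc.ι r * bc.e = 0 := by
    rw [bc.jones, hr]; simp
  have h1 := aux_fbot (bc := bc) Φ hΦB hΦe r hr
  have h2 : (1 - bc.e) * bc.ι r * (1 - bc.e)
      = bc.ι r - bc.e * bc.ι r - bc.ι r * bc.e + bc.e * bc.ι r * bc.e := by
    noncomm_ring
  rw [h2, h0, add_zero] at h1
  rw [sub_sub, sub_eq_zero] at h1
  exact h1

/-- key: products of two B₋ elements lie in A, and ι p e ι q = ι(pq)(1-e). -/
lemma aux_key (Φ : C ≃⋆ₐ[ℂ] C) (hΦB : ∀ b : B, Φ (bc.ι b) = bc.ι b)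
    (hΦe : Φ bc.e = 1 - bc.e) (p q : B) (hp : E.toFun p = 0) (hq : E.toFun q = 0) :
    E.toFun (p * q) = p * q ∧ bc.ι p * bc.e * bc.ι q = bc.ι (p * q) * (1 - bc.e) := by
  have hpe : bc.e * bc.ι p * bc.e = 0 := by rw [bc.jones, hp]; simp
  have hqe : bc.e * bc.ι q * bc.e = 0 := by rw [bc.jones, hq]; simp
  have hps := aux_split (bc := bc) Φ hΦB hΦe p hp
  have hqs := aux_split (bc := bc) Φ hΦB hΦe q hq
  -- (†): ι(pq) = ι(E(pq)) * e + ι p * e * ι q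
  have hdag : bc.ι (p * q) = bc.ι (E.toFun (p * q)) * bc.e + bc.ι p * bc.e * bc.ι q := by
    have h1 : bc.ι (p * q) = bc.ι p * bc.ι q := map_mul _ _ _
    conv_lhs at h1 => skip
    rw [hps, hqs] at h1
    -- expand
    have h2 : (bc.e * bc.ι p + bc.ι p * bc.e) * (bc.e * bc.ι q + bc.ι q * bc.e)
        = (bc.e * bc.ι p * bc.e) * bc.ι q + bc.e * (bc.ι p * bc.ι q) * bc.e
          + bc.ι p * (bc.e * bc.e) * bc.ι q + bc.ι p * (bc.e * bc.ι q * bc.e) := by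
      noncomm_ring
    rw [h2, hpe, hqe, bc.e_idem, ← map_mul] at h1
    have h3 := bc.jones (p * q)
    rw [h3] at h1
    simpa [mul_assoc] using h1
  -- apply Φ to (†)
  have hΦdag := congrArg Φ hdag
  simp only [map_mul, map_add, hΦB, hΦe] at hΦdag
  have h4 : bc.ι p * (1 - bc.e) * bc.ι q = bc.ι p * bc.ι q - bc.ι p * bc.e * bc.ι q := by
    noncomm_ring
  rw [h4] at hΦdag
  have h8 := congrArg (fun t => t - (bc.ι p * bc.ι q - bc.ι p * bc.e * bc.ι q)) hΦdag
  simp only [add_sub_cancel_right, sub_sub_cancel] at h8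
  -- h8 : ι p e ι q = ι(Epq) * (1-e)
  have h5 : bc.ι (p*q) = bc.ι (E.toFun (p*q)) := by
    rw [hdag, h8]; noncomm_ring
  have hEpq : E.toFun (p * q) = p * q := (bc.inj h5).symm
  exact ⟨hEpq, by rw [h8, hEpq]⟩

end Aux2

section Aux3
variable {B C : Type*} [NormedRing B] [StarRing B] [CStarRing B] [NormedAlgebra ℂ B]
    [StarModule ℂ B] [CompleteSpace B]
    [NormedRing C] [StarRing C] [CStarRing C] [NormedAlgebra ℂ C]
    [StarModule ℂ C] [CompleteSpace C]
    {A : StarSubalgebra ℂ B}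

/-- elementary E facts -/
lemma aux_EE (E : CondExp B A) (b : B) : E.toFun (E.toFun b) = E.toFun b :=
  E.fixes _ (E.mem_range b)

lemma aux_Ediff (E : CondExp B A) (b : B) : E.toFun (b - E.toFun b) = 0 := by
  rw [map_sub, aux_EE, sub_self]

lemma aux_Estar0 (E : CondExp B A) {b : B} (hb : E.toFun b = 0) : E.toFun (star b) = 0 := by
  rw [E.star_map, hb, star_zero]

/-- E of a product, via the key decomposition. -/
lemma aux_Emul {C' : Type*} [NormedRing C'] [StarRing C'] [CStarRing C'] [NormedAlgebra ℂ C']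
    [StarModule ℂ C'] [CompleteSpace C'] (E : CondExp B A) (bc : BasicConstruction E C')
    (Φ : C' ≃⋆ₐ[ℂ] C') (hΦB : ∀ b : B, Φ (bc.ι b) = bc.ι b) (hΦe : Φ bc.e = 1 - bc.e)
    (b c : B) :
    E.toFun (b * c) = E.toFun b * E.toFun c + (b - E.toFun b) * (c - E.toFun c) := by
  have h1 : b * c = E.toFun b * E.toFun c + (E.toFun b * (c - E.toFun c)
      + ((b - E.toFun b) * E.toFun c + (b - E.toFun b) * (c - E.toFun c))) := by
    noncomm_ring
  rw [h1, map_add, map_add, map_add]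
  rw [E.fixes _ (mul_mem (E.mem_range b) (E.mem_range c))]
  rw [E.left_mod _ (E.mem_range b), aux_Ediff, mul_zero]
  rw [E.right_mod _ (E.mem_range c), aux_Ediff, zero_mul]
  rw [(aux_key (bc := bc) Φ hΦB hΦe _ _ (aux_Ediff E b) (aux_Ediff E c)).1]
  simp

/-- β as a star algebra equivalence. -/
def auxBeta {C' : Type*} [NormedRing C'] [StarRing C'] [CStarRing C'] [NormedAlgebra ℂ C']
    [StarModule ℂ C'] [CompleteSpace C'] (E : CondExp B A) (bc : BasicConstruction E C')
    (Φ : C' ≃⋆ₐ[ℂ] C') (hΦB : ∀ b : B, Φ (bc.ι b) = bc.ι b) (hΦe : Φ bc.e = 1 - bc.e) :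
    B ≃⋆ₐ[ℂ] B where
  toFun b := E.toFun b + E.toFun b - b
  invFun b := E.toFun b + E.toFun b - b
  left_inv b := by simp only [map_sub, map_add, aux_EE]; abel
  right_inv b := by simp only [map_sub, map_add, aux_EE]; abel
  map_add' b c := by simp only [map_add]; abel
  map_mul' b c := by
    show E.toFun (b * c) + E.toFun (b * c) - b * c
      = (E.toFun b + E.toFun b - b) * (E.toFun c + E.toFun c - c)
    rw [aux_Emul E bc Φ hΦB hΦe b c]
    noncomm_ring
  map_smul' r b := by simp only [map_smul]; module
  map_star' b := by simp only [E.star_map]; rw [star_sub, star_add]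

lemma auxBeta_apply {C' : Type*} [NormedRing C'] [StarRing C'] [CStarRing C'] [NormedAlgebra ℂ C']
    [StarModule ℂ C'] [CompleteSpace C'] (E : CondExp B A) (bc : BasicConstruction E C')
    (Φ : C' ≃⋆ₐ[ℂ] C') (hΦB : ∀ b : B, Φ (bc.ι b) = bc.ι b) (hΦe : Φ bc.e = 1 - bc.e) (b : B) :
    auxBeta E bc Φ hΦB hΦe b = E.toFun b + E.toFun b - b := rfl

end Aux3

section Aux4
variable {B C : Type*} [NormedRing B] [StarRing B] [CStarRing B] [NormedAlgebra ℂ B]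
    [StarModule ℂ B] [CompleteSpace B]
    [NormedRing C] [StarRing C] [CStarRing C] [NormedAlgebra ℂ C]
    [StarModule ℂ C] [CompleteSpace C]
    {A : StarSubalgebra ℂ B} (E : CondExp B A) (bc : BasicConstruction E C)
    (Φ : C ≃⋆ₐ[ℂ] C) (hΦB : ∀ b : B, Φ (bc.ι b) = bc.ι b) (hΦe : Φ bc.e = 1 - bc.e)

include bc Φ hΦB hΦe in
lemma aux_Econt : Continuous fun b : B => E.toFun b := by
  letI : CStarAlgebra B :=
    { ‹NormedRing B›, ‹StarRing B›, ‹CStarRing B›, ‹NormedAlgebra ℂ B›, ‹StarModule ℂ B›,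
      ‹CompleteSpace B› with }
  have hβ : Continuous fun b : B => (auxBeta E bc Φ hΦB hΦe) b :=
    (StarAlgEquiv.isometry (auxBeta E bc Φ hΦB hΦe)).continuous
  have hfun : (fun b : B => E.toFun b)
      = fun b : B => (2⁻¹ : ℂ) • (b + (auxBeta E bc Φ hΦB hΦe) b) := by
    funext b
    rw [auxBeta_apply]
    have : b + (E.toFun b + E.toFun b - b) = (2 : ℂ) • E.toFun b := by
      rw [two_smul]; abel
    rw [this, smul_smul]
    norm_num
  rw [hfun]
  exact ((continuous_id.add hβ).const_smul _)

include bc Φ hΦB hΦe in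
lemma aux_Aclosed : IsClosed (A : Set B) := by
  have h1 : (A : Set B) = {b : B | E.toFun b = b} := by
    ext b
    exact ⟨fun hb => E.fixes b hb, fun hb => hb ▸ E.mem_range b⟩
  rw [h1]
  exact isClosed_eq (aux_Econt E bc Φ hΦB hΦe) continuous_id

include bc Φ hΦB hΦe in
lemma aux_Bmclosed : IsClosed {b : B | E.toFun b = 0} :=
  isClosed_eq (aux_Econt E bc Φ hΦB hΦe) continuous_const

end Aux4

section Aux5
variable {B C : Type*} [NormedRing B] [StarRing B] [CStarRing B] [NormedAlgebra ℂ B]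
    [StarModule ℂ B] [CompleteSpace B]
    [NormedRing C] [StarRing C] [CStarRing C] [NormedAlgebra ℂ C]
    [StarModule ℂ C] [CompleteSpace C]
    {A : StarSubalgebra ℂ B} {E : CondExp B A} {n : ℕ} {x : Fin n → B}
    (bc : BasicConstruction E C)
    (Φ : C ≃⋆ₐ[ℂ] C) (hΦB : ∀ b : B, Φ (bc.ι b) = bc.ι b) (hΦe : Φ bc.e = 1 - bc.e)

include Φ hΦB hΦe in
lemma aux_psi_iso (hx : IsQuasiBasis E x) : ∀ a ∈ A, ‖bc.ι a * bc.e‖ = ‖a‖ := by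
  letI : CStarAlgebra B :=
    { ‹NormedRing B›, ‹StarRing B›, ‹CStarRing B›, ‹NormedAlgebra ℂ B›, ‹StarModule ℂ B›,
      ‹CompleteSpace B› with }
  letI : CStarAlgebra C :=
    { ‹NormedRing C›, ‹StarRing C›, ‹CStarRing C›, ‹NormedAlgebra ℂ C›, ‹StarModule ℂ C›,
      ‹CompleteSpace C› with }
  haveI : IsClosed (A : Set B) := aux_Aclosed E bc Φ hΦB hΦe
  let ψ : A →⋆ₙₐ[ℂ] C :=
    { toFun := fun a => bc.ι a * bc.e
      map_smul' := fun c a => by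
        show bc.ι ↑(c • a) * bc.e = c • (bc.ι ↑a * bc.e)
        rw [SetLike.val_smul, map_smul, smul_mul_assoc]
      map_zero' := by simp
      map_add' := fun a b => by
        simp only [AddMemClass.coe_add, map_add, add_mul]
      map_mul' := fun a b => by
        show bc.ι ↑(a * b) * bc.e = bc.ι ↑a * bc.e * (bc.ι ↑b * bc.e)
        have hc : bc.e * bc.ι ↑b = bc.ι ↑b * bc.e := aux_comm (bc := bc) hx _ b.2
        have hassoc : bc.ι (a : B) * bc.e * (bc.ι (b : B) * bc.e)
            = bc.ι (a : B) * (bc.e * bc.ι (b : B)) * bc.e := by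
          simp [mul_assoc]
        rw [MulMemClass.coe_mul, map_mul, hassoc, hc]
        simp [mul_assoc, bc.e_idem]
      map_star' := fun a => by
        have h1 : star (bc.ι ↑a * bc.e) = bc.e * bc.ι (star (a : B)) := by
          rw [star_mul, bc.e_star, map_star]
        rw [h1, aux_comm (bc := bc) hx _ (star_mem a.2)]
        rfl }
  have hinj : Function.Injective ψ := by
    intro a b h
    apply Subtype.ext
    have h2 : bc.ι ((a : B) - b) * bc.e = 0 := by
      rw [map_sub, sub_mul]
      exact sub_eq_zero.mpr h
    have := bc.mul_e_inj _ h2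
    exact sub_eq_zero.mp this
  intro a ha
  exact NonUnitalStarAlgHom.norm_map ψ hinj ⟨a, ha⟩

include Φ hΦB hΦe in
lemma aux_eta_iso (hx : IsQuasiBasis E x) : ∀ p : B, E.toFun p = 0 → ‖bc.e * bc.ι p‖ = ‖p‖ := by
  intro p hp
  have hkey := (aux_key (bc := bc) Φ hΦB hΦe p (star p) hp (aux_Estar0 E hp)).1
  have hmem : p * star p ∈ A := by rw [← hkey]; exact E.mem_range _
  have h1 : (bc.e * bc.ι p) * star (bc.e * bc.ι p) = bc.ι (p * star p) * bc.e := by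
    rw [star_mul, bc.e_star, ← map_star]
    have h2 : bc.e * bc.ι p * (bc.ι (star p) * bc.e) = bc.e * (bc.ι (p * star p) * bc.e) := by
      simp [map_mul, mul_assoc]
    rw [h2, aux_jones'', hkey]
  have h3 : ‖bc.e * bc.ι p‖ * ‖bc.e * bc.ι p‖ = ‖p‖ * ‖p‖ := by
    rw [← CStarRing.norm_self_mul_star, h1, aux_psi_iso bc Φ hΦB hΦe hx _ hmem,
      CStarRing.norm_self_mul_star]
  exact (mul_self_inj (norm_nonneg _) (norm_nonneg _)).mp h3

include Φ hΦB hΦe in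
lemma aux_uniq (hx : IsQuasiBasis E x) : ∀ b : B, bc.e * bc.ι b = 0 → b = 0 := by
  intro b h
  have h1 : bc.e * bc.ι b * bc.e = 0 := by rw [h, zero_mul]
  rw [bc.jones] at h1
  have h2 : E.toFun b = 0 := bc.mul_e_inj _ h1
  have h3 := aux_eta_iso bc Φ hΦB hΦe hx b h2
  rw [h, norm_zero] at h3
  exact norm_eq_zero.mp h3.symm

end Aux5

section Aux6
variable {B C : Type*} [NormedRing B] [StarRing B] [CStarRing B] [NormedAlgebra ℂ B]
    [StarModule ℂ B] [CompleteSpace B]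
    [NormedRing C] [StarRing C] [CStarRing C] [NormedAlgebra ℂ C]
    [StarModule ℂ C] [CompleteSpace C]
    {A : StarSubalgebra ℂ B} {E : CondExp B A} {n : ℕ} {x : Fin n → B}
    (bc : BasicConstruction E C)
    (Φ : C ≃⋆ₐ[ℂ] C) (hΦB : ∀ b : B, Φ (bc.ι b) = bc.ι b) (hΦe : Φ bc.e = 1 - bc.e)

include Φ hΦB hΦe in
lemma aux_exists (hx : IsQuasiBasis E x) :
    ∀ y : C, ∃ b : B, bc.e * y = bc.e * bc.ι b := by
  letI : CStarAlgebra B :=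
    { ‹NormedRing B›, ‹StarRing B›, ‹CStarRing B›, ‹NormedAlgebra ℂ B›, ‹StarModule ℂ B›,
      ‹CompleteSpace B› with }
  letI : CStarAlgebra C :=
    { ‹NormedRing C›, ‹StarRing C›, ‹CStarRing C›, ‹NormedAlgebra ℂ C›, ‹StarModule ℂ C›,
      ‹CompleteSpace C› with }
  haveI : IsClosed (A : Set B) := aux_Aclosed E bc Φ hΦB hΦe
  -- closed range 1
  have h1 : IsClosed {v : C | ∃ a : B, a ∈ A ∧ v = bc.ι a * bc.e} := by
    let L1 : A →ₗ[ℂ] C :=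
      { toFun := fun a => bc.ι ↑a * bc.e
        map_add' := fun a b => by
          show bc.ι ↑(a + b) * bc.e = bc.ι ↑a * bc.e + bc.ι ↑b * bc.e
          rw [AddMemClass.coe_add, map_add, add_mul]
        map_smul' := fun c a => by
          show bc.ι ↑(c • a) * bc.e = c • (bc.ι ↑a * bc.e)
          rw [SetLike.val_smul, map_smul, smul_mul_assoc] }
    have hiso : Isometry L1 := by
      apply AddMonoidHomClass.isometry_of_norm
      intro a
      exact aux_psi_iso bc Φ hΦB hΦe hx _ a.2
    have hcr := hiso.isClosedEmbedding.isClosed_range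
    have hset : Set.range L1 = {v : C | ∃ a : B, a ∈ A ∧ v = bc.ι a * bc.e} := by
      ext v
      constructor
      · rintro ⟨a, rfl⟩; exact ⟨↑a, a.2, rfl⟩
      · rintro ⟨a, ha, rfl⟩; exact ⟨⟨a, ha⟩, rfl⟩
    rwa [hset] at hcr
  -- closed range 2
  have hMclosed : IsClosed ((LinearMap.ker E.toFun : Submodule ℂ B) : Set B) := by
    have : ((LinearMap.ker E.toFun : Submodule ℂ B) : Set B) = {b : B | E.toFun b = 0} := by
      ext b; exact LinearMap.mem_ker
    rw [this]; exact aux_Bmclosed E bc Φ hΦB hΦe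
  haveI : CompleteSpace (LinearMap.ker E.toFun : Submodule ℂ B) :=
    hMclosed.completeSpace_coe
  have h2 : IsClosed {v : C | ∃ p : B, E.toFun p = 0 ∧ v = bc.e * bc.ι p} := by
    let L2 : (LinearMap.ker E.toFun : Submodule ℂ B) →ₗ[ℂ] C :=
      { toFun := fun p => bc.e * bc.ι ↑p
        map_add' := fun a b => by
          show bc.e * bc.ι ↑(a + b) = bc.e * bc.ι ↑a + bc.e * bc.ι ↑b
          rw [Submodule.coe_add, map_add, mul_add]
        map_smul' := fun c a => by
          show bc.e * bc.ι ↑(c • a) = c • (bc.e * bc.ι ↑a)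
          rw [SetLike.val_smul, map_smul, mul_smul_comm] }
    have hiso : Isometry L2 := by
      apply AddMonoidHomClass.isometry_of_norm
      intro p
      exact aux_eta_iso bc Φ hΦB hΦe hx ↑p p.2
    have hcr := hiso.isClosedEmbedding.isClosed_range
    have hset : Set.range L2 = {v : C | ∃ p : B, E.toFun p = 0 ∧ v = bc.e * bc.ι p} := by
      ext v
      constructor
      · rintro ⟨p, rfl⟩; exact ⟨↑p, p.2, rfl⟩
      · rintro ⟨p, hp, rfl⟩; exact ⟨⟨p, hp⟩, rfl⟩
    rwa [hset] at hcr
  -- the sum set is closed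
  have hV : IsClosed {v : C | ∃ a p : B, a ∈ A ∧ E.toFun p = 0 ∧ v = bc.ι a * bc.e + bc.e * bc.ι p} := by
    have hset : {v : C | ∃ a p : B, a ∈ A ∧ E.toFun p = 0 ∧ v = bc.ι a * bc.e + bc.e * bc.ι p}
        = {v : C | v * bc.e ∈ {v : C | ∃ a : B, a ∈ A ∧ v = bc.ι a * bc.e}}
          ∩ {v : C | v - v * bc.e ∈ {v : C | ∃ p : B, E.toFun p = 0 ∧ v = bc.e * bc.ι p}} := by
      ext v
      constructor
      · rintro ⟨a, p, ha, hp, rfl⟩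
        have hpe : bc.e * bc.ι p * bc.e = 0 := by rw [bc.jones, hp]; simp
        have hve : (bc.ι a * bc.e + bc.e * bc.ι p) * bc.e = bc.ι a * bc.e := by
          rw [add_mul, mul_assoc, bc.e_idem, hpe, add_zero]
        constructor
        · rw [Set.mem_setOf_eq, hve]; exact ⟨a, ha, rfl⟩
        · rw [Set.mem_setOf_eq, hve, add_sub_cancel_left]; exact ⟨p, hp, rfl⟩
      · rintro ⟨⟨a, ha, hva⟩, ⟨p, hp, hvp⟩⟩
        refine ⟨a, p, ha, hp, ?_⟩
        rw [← hva, ← hvp]; abel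
    rw [hset]
    exact (h1.preimage (continuous_mul_right _)).inter
      (h2.preimage (continuous_id.sub (continuous_mul_right _)))
  -- the corresponding submodule of C
  let T : Submodule ℂ C :=
    { carrier := {y : C | ∃ a p : B, a ∈ A ∧ E.toFun p = 0 ∧
        bc.e * y = bc.ι a * bc.e + bc.e * bc.ι p}
      zero_mem' := ⟨0, 0, zero_mem A, map_zero _, by simp⟩
      add_mem' := by
        rintro y z ⟨a₁, p₁, ha₁, hp₁, hy⟩ ⟨a₂, p₂, ha₂, hp₂, hz⟩
        refine ⟨a₁ + a₂, p₁ + p₂, add_mem ha₁ ha₂, by rw [map_add, hp₁, hp₂, add_zero], ?_⟩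
        rw [mul_add, hy, hz, map_add, map_add, add_mul, mul_add]
        abel
      smul_mem' := by
        rintro c y ⟨a, p, ha, hp, hy⟩
        refine ⟨c • a, c • p, SMulMemClass.smul_mem c ha, by rw [map_smul, hp, smul_zero], ?_⟩
        rw [mul_smul_comm, hy, map_smul, map_smul, smul_add, smul_mul_assoc, mul_smul_comm] }
  have hTclosed : IsClosed (T : Set C) := by
    have : (T : Set C) = (fun y : C => bc.e * y) ⁻¹'
        {v : C | ∃ a p : B, a ∈ A ∧ E.toFun p = 0 ∧ v = bc.ι a * bc.e + bc.e * bc.ι p} := rfl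
    rw [this]
    exact hV.preimage (continuous_mul_left _)
  have hgen : {y : C | ∃ b c : B, y = bc.ι b * bc.e * bc.ι c} ⊆ (T : Set C) := by
    rintro _ ⟨b, c, rfl⟩
    refine ⟨E.toFun b * E.toFun c, E.toFun b * (c - E.toFun c),
      mul_mem (E.mem_range b) (E.mem_range c),
      by rw [E.left_mod _ (E.mem_range b), aux_Ediff, mul_zero], ?_⟩
    have h3 : bc.e * (bc.ι b * bc.e * bc.ι c) = bc.ι (E.toFun b) * bc.e * bc.ι c := by
      rw [← mul_assoc, ← mul_assoc, bc.jones]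
    rw [h3]
    have h4 : bc.ι c = bc.ι (E.toFun c) + bc.ι (c - E.toFun c) := by
      rw [← map_add]; congr 1; abel
    rw [h4, mul_add]
    congr 1
    · rw [mul_assoc, aux_comm (bc := bc) hx _ (E.mem_range c), map_mul, mul_assoc]
    · rw [mul_assoc, map_mul, ← mul_assoc, ← aux_comm (bc := bc) hx _ (E.mem_range b), mul_assoc]
  have hle : Submodule.span ℂ {y : C | ∃ b c : B, y = bc.ι b * bc.e * bc.ι c} ≤ T :=
    Submodule.span_le.mpr hgen
  have htop : (⊤ : Submodule ℂ C) ≤ T := by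
    rw [← bc.dense]
    exact Submodule.topologicalClosure_minimal _ hle hTclosed
  intro y
  obtain ⟨a, p, ha, hp, hy⟩ := htop (Submodule.mem_top (x := y))
  refine ⟨a + p, ?_⟩
  rw [map_add, mul_add, hy, aux_comm (bc := bc) hx _ ha]

end Aux6
/-- `B₋ = {b ∈ B : E(b) = 0} = {b : β(b) = −b}`, with the bimodule
structure inherited from `B`, inner products `_A⟨x,y⟩ = E(xy*)`, `⟨x,y⟩_A = E(x*y)` and
involution `x^♯ = x*`, is an involutive A-A-equivalence bimodule, and it is isomorphic
to `X_B = e_A C*⟨B,e_A⟩(1−e_A)` as involutive A-A-equivalence bimodules. -/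
theorem Bminus_involutive_bimodule_iso_corner
    {B C : Type*} [NormedRing B] [StarRing B] [CStarRing B] [NormedAlgebra ℂ B]
    [StarModule ℂ B] [CompleteSpace B]
    [NormedRing C] [StarRing C] [CStarRing C] [NormedAlgebra ℂ C]
    [StarModule ℂ C] [CompleteSpace C]
    {A : StarSubalgebra ℂ B} (E : CondExp B A)
    {n : ℕ} (x : Fin n → B) (hx : IsQuasiBasis E x)
    (hidx : ∑ i, x i * star (x i) = (2 : B))
    (bc : BasicConstruction E C)
    (Et : C →ₗ[ℂ] B)
    (hEt : ∀ b c : B, Et (bc.ι b * bc.e * bc.ι c) = ((2 : ℂ))⁻¹ • (b * c))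
    (Φ : C ≃⋆ₐ[ℂ] C)
    (hΦB : ∀ b : B, Φ (bc.ι b) = bc.ι b)
    (hΦe : Φ bc.e = 1 - bc.e)
    (hΦ2 : ∀ y : C, Φ (Φ y) = y)
    (Cn : C → Prop) (hCn : ∀ y, Cn y ↔ bc.e * y * (1 - bc.e) = y)
    (Bm : Set B) (hBm : Bm = {b : B | E.toFun b = 0}) :
    -- B₋ = {b : β(b) = −b}
    (Bm = {b : B | 2 * E.toFun b - b = -b}) ∧
    -- B₋ is an A-A-subbimodule of B, closed under the involution x^♯ = x*
    (∀ a ∈ A, ∀ b ∈ Bm, a * b ∈ Bm ∧ b * a ∈ Bm) ∧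
    (∀ b ∈ Bm, star b ∈ Bm) ∧
    -- imprimitivity for the inner products _A⟨x,y⟩ = E(xy*), ⟨x,y⟩_A = E(x*y)
    (∀ p ∈ Bm, ∀ q ∈ Bm, ∀ r ∈ Bm, E.toFun (p * star q) * r = p * E.toFun (star q * r)) ∧
    -- fullness of both inner products
    ((Submodule.span ℂ {a : B | ∃ p ∈ Bm, ∃ q ∈ Bm, a = E.toFun (p * star q)}).topologicalClosure
       = Subalgebra.toSubmodule A.toSubalgebra) ∧
    ((Submodule.span ℂ {a : B | ∃ p ∈ Bm, ∃ q ∈ Bm, a = E.toFun (star p * q)}).topologicalClosure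
       = Subalgebra.toSubmodule A.toSubalgebra) ∧
    -- B₋ ≅ X_B as involutive bimodules, via x ↦ φ(x) − E(φ(x)) where e_A x = e_A φ(x)
    (∃ f : C → B,
      (∀ y : C, bc.e * y = bc.e * bc.ι (f y)) ∧
      (Set.BijOn (fun y => f y - E.toFun (f y)) {y | Cn y} Bm) ∧
      (∀ y z, Cn y → Cn z →
        (f (y + z) - E.toFun (f (y + z))) = (f y - E.toFun (f y)) + (f z - E.toFun (f z))) ∧
      (∀ (c : ℂ) (y : C), Cn y →
        (f (c • y) - E.toFun (f (c • y))) = c • (f y - E.toFun (f y))) ∧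
      -- intertwines the A-A-actions
      (∀ a ∈ A, ∀ y, Cn y →
        (f (bc.ι a * y) - E.toFun (f (bc.ι a * y))) = a * (f y - E.toFun (f y)) ∧
        (f (y * bc.ι a) - E.toFun (f (y * bc.ι a))) = (f y - E.toFun (f y)) * a) ∧
      -- preserves both inner products
      (∀ y z, Cn y → Cn z →
        bc.ι (E.toFun ((f y - E.toFun (f y)) * star (f z - E.toFun (f z)))) * bc.e
          = y * star z ∧
        bc.ι (E.toFun (star (f y - E.toFun (f y)) * (f z - E.toFun (f z)))) * (1 - bc.e)
          = star y * z) ∧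
      -- preserves the involutions: f(y^♯) = f(y)* on the corner
      (∀ y, Cn y →
        (f (Φ (star y)) - E.toFun (f (Φ (star y)))) = star (f y - E.toFun (f y)))) := by
  -- abbreviations
  have hBmm : ∀ b : B, b ∈ Bm ↔ E.toFun b = 0 := by
    intro b; rw [hBm]; exact Iff.rfl
  have hE1 : E.toFun (1 : B) = 1 := E.fixes 1 (one_mem A)
  have huniq : ∀ b b' : B, bc.e * bc.ι b = bc.e * bc.ι b' → b = b' := by
    intro b b' h
    have h0 : bc.e * bc.ι (b - b') = 0 := by
      rw [map_sub, mul_sub, h, sub_self]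
    exact sub_eq_zero.mp (aux_uniq bc Φ hΦB hΦe hx _ h0)
  -- quasi-basis B₋ decomposition of unity
  set pp : Fin n → B := fun i => x i - E.toFun (x i) with hppdef
  have hpp0 : ∀ i, E.toFun (pp i) = 0 := fun i => aux_Ediff E (x i)
  have hppsum : ∑ i, pp i * star (pp i) = 1 := by
    have expand : ∀ i, pp i * star (pp i)
        = x i * star (x i) - x i * star (E.toFun (x i))
          - E.toFun (x i) * star (x i) + E.toFun (x i) * star (E.toFun (x i)) := by
      intro i
      rw [hppdef]
      simp only [star_sub]
      noncomm_ring
    have hs2 : ∑ i, E.toFun (x i) * star (x i) = 1 := by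
      have h := hx.2 1
      simpa only [one_mul] using h
    have hs3 : ∑ i, x i * star (E.toFun (x i)) = 1 := by
      have h := congrArg star hs2
      rw [star_sum] at h
      simp only [star_mul, star_star] at h
      rw [star_one] at h
      exact h
    have hs4 : ∑ i, E.toFun (x i) * star (E.toFun (x i)) = 1 := by
      have h := congrArg (fun t => E.toFun t) hs2
      simp only [map_sum, hE1] at h
      have hterm : ∀ i, E.toFun (E.toFun (x i) * star (x i))
          = E.toFun (x i) * star (E.toFun (x i)) := by
        intro i
        rw [E.left_mod _ (E.mem_range (x i)), E.star_map]
      rw [Finset.sum_congr rfl fun i _ => hterm i] at h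
      exact h
    rw [Finset.sum_congr rfl fun i _ => expand i]
    rw [Finset.sum_add_distrib, Finset.sum_sub_distrib, Finset.sum_sub_distrib,
      hidx, hs2, hs3, hs4]
    norm_num
  refine ⟨?_, ?_, ?_, ?_, ?_, ?_, ?_⟩
  -- 1 : Bm = {b | 2 E b - b = -b}
  · rw [hBm]
    ext b
    simp only [Set.mem_setOf_eq]
    constructor
    · intro h; rw [h, mul_zero, zero_sub]
    · intro h
      have h2 : (2 : B) * E.toFun b = 0 := by
        have h3 := congrArg (· + b) h
        simpa using h3
      have h3 : (2 : ℂ) • E.toFun b = 0 := by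
        rw [two_smul, ← two_mul]; exact h2
      have h4 := congrArg (fun t => (2⁻¹ : ℂ) • t) h3
      simp only [smul_smul, smul_zero] at h4
      norm_num at h4
      exact h4
  -- 2 : A-A bimodule
  · intro a ha b hb
    rw [hBmm] at hb
    exact ⟨(hBmm _).mpr (by rw [E.left_mod a ha, hb, mul_zero]),
      (hBmm _).mpr (by rw [E.right_mod a ha, hb, zero_mul])⟩
  -- 3 : star closed
  · intro b hb
    rw [hBmm] at hb ⊢
    exact aux_Estar0 E hb
  -- 4 : imprimitivity
  · intro p hp q hq r hr
    rw [hBmm] at hp hq hr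
    rw [(aux_key (bc := bc) Φ hΦB hΦe p (star q) hp (aux_Estar0 E hq)).1,
      (aux_key (bc := bc) Φ hΦB hΦe (star q) r (aux_Estar0 E hq) hr).1]
    exact mul_assoc _ _ _
  -- 5 : fullness of left inner product
  · apply le_antisymm
    · apply Submodule.topologicalClosure_minimal
      · apply Submodule.span_le.mpr
        rintro v ⟨p, hp, q, hq, rfl⟩
        exact E.mem_range _
      · exact aux_Aclosed E bc Φ hΦB hΦe
    · intro a ha
      rw [Subalgebra.mem_toSubmodule] at ha
      apply Submodule.le_topologicalClosure
      have hrep : a = ∑ i, E.toFun ((a * pp i) * star (pp i)) := by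
        have hterm : ∀ i, E.toFun ((a * pp i) * star (pp i)) = a * (pp i * star (pp i)) := by
          intro i
          rw [(aux_key (bc := bc) Φ hΦB hΦe (a * pp i) (star (pp i))
            (by rw [E.left_mod a ha, hpp0, mul_zero]) (aux_Estar0 E (hpp0 i))).1]
          rw [mul_assoc]
        rw [Finset.sum_congr rfl fun i _ => hterm i, ← Finset.mul_sum, hppsum, mul_one]
      rw [hrep]
      apply Submodule.sum_mem
      intro i _
      apply Submodule.subset_span
      exact ⟨a * pp i, (hBmm _).mpr (by rw [E.left_mod a ha, hpp0, mul_zero]),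
        pp i, (hBmm _).mpr (hpp0 i), rfl⟩
  -- 6 : fullness of right inner product
  · apply le_antisymm
    · apply Submodule.topologicalClosure_minimal
      · apply Submodule.span_le.mpr
        rintro v ⟨p, hp, q, hq, rfl⟩
        exact E.mem_range _
      · exact aux_Aclosed E bc Φ hΦB hΦe
    · intro a ha
      rw [Subalgebra.mem_toSubmodule] at ha
      apply Submodule.le_topologicalClosure
      have hrep : a = ∑ i, E.toFun (star (star (pp i)) * (star (pp i) * a)) := by
        have hterm : ∀ i, E.toFun (star (star (pp i)) * (star (pp i) * a))
            = pp i * star (pp i) * a := by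
          intro i
          rw [star_star]
          rw [(aux_key (bc := bc) Φ hΦB hΦe (pp i) (star (pp i) * a)
            (hpp0 i) (by rw [E.right_mod a ha, aux_Estar0 E (hpp0 i), zero_mul])).1]
          rw [mul_assoc]
        rw [Finset.sum_congr rfl fun i _ => hterm i, ← Finset.sum_mul, hppsum, one_mul]
      rw [hrep]
      apply Submodule.sum_mem
      intro i _
      apply Submodule.subset_span
      exact ⟨star (pp i), (hBmm _).mpr (aux_Estar0 E (hpp0 i)),
        star (pp i) * a, (hBmm _).mpr (by rw [E.right_mod a ha, aux_Estar0 E (hpp0 i), zero_mul]),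
        rfl⟩
  -- 7 : the isomorphism with the corner
  · obtain ⟨f, hf⟩ := Classical.axiomOfChoice (aux_exists bc Φ hΦB hΦe hx)
    have hfy : ∀ (y : C) (b : B), bc.e * y = bc.e * bc.ι b → f y = b := by
      intro y b h
      exact huniq _ _ ((hf y).symm.trans h)
    have hg0 : ∀ y : C, E.toFun (f y - E.toFun (f y)) = 0 := fun y => aux_Ediff E (f y)
    -- corner representation : for Cn y, y = e * ι (g y)
    have hcorner : ∀ y : C, Cn y → y = bc.e * bc.ι (f y - E.toFun (f y)) := by
      intro y hy
      have h1 : y = bc.e * y * (1 - bc.e) := ((hCn y).mp hy).symm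
      rw [hf y] at h1
      have h2 : bc.e * bc.ι (f y) * (1 - bc.e)
          = bc.e * bc.ι (f y) - bc.ι (E.toFun (f y)) * bc.e := by
        rw [mul_sub, mul_one, bc.jones]
      have h3 : bc.e * bc.ι (f y - E.toFun (f y))
          = bc.e * bc.ι (f y) - bc.ι (E.toFun (f y)) * bc.e := by
        rw [map_sub, mul_sub, aux_comm (bc := bc) hx _ (E.mem_range (f y))]
      rw [h2] at h1
      rw [h3]
      exact h1
    refine ⟨f, hf, ⟨?_, ?_, ?_⟩, ?_, ?_, ?_, ?_, ?_⟩
    -- maps to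
    · intro y _
      exact (hBmm _).mpr (hg0 y)
    -- inj on
    · intro y hy z hz heq
      have heq' : f y - E.toFun (f y) = f z - E.toFun (f z) := heq
      rw [hcorner y hy, hcorner z hz, heq']
    -- surj on
    · intro p hp
      rw [hBmm] at hp
      have hpe : bc.e * bc.ι p * bc.e = 0 := by rw [bc.jones, hp]; simp
      have h1e : (1 - bc.e) * (1 - bc.e) = 1 - bc.e := by
        rw [mul_sub, mul_one, sub_mul, one_mul, bc.e_idem, sub_self, sub_zero]
      refine ⟨bc.e * bc.ι p * (1 - bc.e), ?_, ?_⟩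
      · show Cn _
        rw [hCn]
        have : bc.e * (bc.e * bc.ι p * (1 - bc.e)) * (1 - bc.e)
            = bc.e * bc.e * bc.ι p * ((1 - bc.e) * (1 - bc.e)) := by
          simp [mul_assoc]
        rw [this, bc.e_idem, h1e]
      · have hey : bc.e * (bc.e * bc.ι p * (1 - bc.e)) = bc.e * bc.ι p := by
          have hinner : bc.e * bc.ι p * (1 - bc.e) = bc.e * bc.ι p - bc.e * bc.ι p * bc.e := by
            rw [mul_sub, mul_one]
          rw [hinner, mul_sub, ← mul_assoc, bc.e_idem, ← mul_assoc, ← mul_assoc, bc.e_idem,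
            hpe, sub_zero]
        have h5 : f (bc.e * bc.ι p * (1 - bc.e)) = p := hfy _ _ hey
        show f _ - E.toFun (f _) = p
        rw [h5, hp, sub_zero]
    -- additive
    · intro y z _ _
      have hadd : f (y + z) = f y + f z := by
        apply hfy
        rw [mul_add, hf y, hf z, map_add, mul_add]
      rw [hadd, map_add]
      abel
    -- scalar
    · intro c y _
      have hsmul : f (c • y) = c • f y := by
        apply hfy
        rw [mul_smul_comm, hf y, map_smul, mul_smul_comm]
      rw [hsmul, map_smul, smul_sub]
    -- A-action
    · intro a ha y _
      constructor
      · have hla : f (bc.ι a * y) = a * f y := by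
          apply hfy
          rw [← mul_assoc, aux_comm (bc := bc) hx a ha, mul_assoc, hf y, ← mul_assoc,
            ← aux_comm (bc := bc) hx a ha, mul_assoc, ← map_mul]
        rw [hla, E.left_mod a ha, mul_sub]
      · have hra : f (y * bc.ι a) = f y * a := by
          apply hfy
          rw [← mul_assoc, hf y, mul_assoc, ← map_mul]
        rw [hra, E.right_mod a ha, sub_mul]
    -- inner products
    · have hip1 : ∀ p q : B, E.toFun p = 0 → E.toFun q = 0 →
          (bc.e * bc.ι p) * star (bc.e * bc.ι q) = bc.ι (E.toFun (p * star q)) * bc.e := by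
        intro p q hp hq
        rw [star_mul, ← map_star, bc.e_star]
        have h6 : bc.e * bc.ι p * (bc.ι (star q) * bc.e)
            = bc.e * (bc.ι (p * star q) * bc.e) := by
          simp [map_mul, mul_assoc]
        rw [h6, aux_jones'']
      have hip2 : ∀ p q : B, E.toFun p = 0 → E.toFun q = 0 →
          star (bc.e * bc.ι p) * (bc.e * bc.ι q) = bc.ι (E.toFun (star p * q)) * (1 - bc.e) := by
        intro p q hp hq
        rw [star_mul, ← map_star, bc.e_star]
        have h7 : bc.ι (star p) * bc.e * (bc.e * bc.ι q)
            = bc.ι (star p) * bc.e * bc.ι q := by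
          rw [mul_assoc, ← mul_assoc bc.e, bc.e_idem, ← mul_assoc]
        rw [h7]
        have hkey := aux_key (bc := bc) Φ hΦB hΦe (star p) q (aux_Estar0 E hp) hq
        rw [hkey.2, hkey.1]
      intro y z hy hz
      constructor
      · conv_rhs => rw [hcorner y hy, hcorner z hz]
        exact (hip1 _ _ (hg0 y) (hg0 z)).symm
      · conv_rhs => rw [hcorner y hy, hcorner z hz]
        exact (hip2 _ _ (hg0 y) (hg0 z)).symm
    -- involution
    · intro y hy
      have hgy := hcorner y hy
      have hstar : star y = bc.ι (star (f y - E.toFun (f y))) * bc.e := by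
        have h := congrArg star hgy
        rw [star_mul, ← map_star, bc.e_star] at h
        exact h
      have hΦy : Φ (star y) = bc.ι (star (f y - E.toFun (f y))) * (1 - bc.e) := by
        rw [hstar, map_mul, hΦB, hΦe]
      have hse : bc.e * bc.ι (star (f y - E.toFun (f y))) * bc.e = 0 := by
        rw [bc.jones, aux_Estar0 E (hg0 y)]; simp
      have heΦ : bc.e * Φ (star y) = bc.e * bc.ι (star (f y - E.toFun (f y))) := by
        rw [hΦy, ← mul_assoc, mul_sub, mul_one, hse, sub_zero]
      have h8 : f (Φ (star y)) = star (f y - E.toFun (f y)) := hfy _ _ heΦ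
      rw [h8, aux_Estar0 E (hg0 y), sub_zero]

end
end

section
/- Let A_θ be the irrational rotation C*-algebra with unitary generators u, v satisfying uv = e^{2πiθ}vu, and let A_{2θ} ⊂ A_θ be the C*-subalgebra generated by u² and v. Then there is no ℤ₂-action β on A_{2θ} such that A_θ ≅ A_{2θ} ⋊_β ℤ₂. (Otherwise the projection (1+w)/2 for the implementing self-adjoint unitary w would have trace 1/2, contradicting τ(K₀-projections of A_θ) = (ℤ + θℤ) ∩ (0,1) ∪ {0,1}.) -/
noncomputable section

open scoped ComplexOrder

/-- the irrational rotation algebra `A_θ` (generated by unitaries `u, v`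
with `uv = e^{2πiθ}vu`, with unique tracial state `τ` whose values on projections lie
in `ℤ + θℤ`) is not a ℤ₂-crossed product of the subalgebra `A_{2θ}` generated by
`u², v`: there is no self-adjoint unitary `w ∈ A_θ` normalizing `A_{2θ}` with
`A_θ = A_{2θ} + A_{2θ}w` (with unique decomposition). -/
theorem rotation_algebra_not_Z2_crossed_product
    {Aθ : Type*} [NormedRing Aθ] [StarRing Aθ] [CStarRing Aθ] [NormedAlgebra ℂ Aθ]
    [StarModule ℂ Aθ] [CompleteSpace Aθ]
    (θ : ℝ) (hθ : Irrational θ) (hθ01 : θ ∈ Set.Ioo (0 : ℝ) 1)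
    (u v : Aθ)
    (hu : star u * u = 1 ∧ u * star u = 1)
    (hv : star v * v = 1 ∧ v * star v = 1)
    (hcomm : u * v = Complex.exp (2 * Real.pi * θ * Complex.I) • (v * u))
    -- A_θ is generated by u and v
    (hgen : (StarAlgebra.adjoin ℂ {u, v} : StarSubalgebra ℂ Aθ).topologicalClosure = ⊤)
    -- the subalgebra A_{2θ} generated by u² and v
    (A2θ : StarSubalgebra ℂ Aθ)
    (hA2θ : A2θ = (StarAlgebra.adjoin ℂ {u * u, v}).topologicalClosure)
    (hdecu : ∀ x : Aθ, ∃ a ∈ A2θ, ∃ b ∈ A2θ, x = a + b * u)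
    -- τ is the unique tracial state on A_θ
    (τ : Aθ →ₗ[ℂ] ℂ)
    (hτ1 : τ 1 = 1)
    (hτtr : ∀ x y : Aθ, τ (x * y) = τ (y * x))
    (hτpos : ∀ x : Aθ, 0 ≤ τ (star x * x))
    (hτuniq : ∀ σ : Aθ →ₗ[ℂ] ℂ, σ 1 = 1 → (∀ x y : Aθ, σ (x * y) = σ (y * x)) →
      (∀ x : Aθ, 0 ≤ σ (star x * x)) → σ = τ)
    -- the values of τ on projections lie in ℤ + θℤ
    (hτproj : ∀ p : Aθ, star p = p → p * p = p → ∃ m n : ℤ, τ p = (m : ℂ) + (θ : ℂ) * n) :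
    ¬ ∃ w : Aθ, star w = w ∧ w * w = 1 ∧
        (∀ a ∈ A2θ, w * a * w ∈ A2θ) ∧
        (∀ x : Aθ, ∃ a ∈ A2θ, ∃ b ∈ A2θ, x = a + b * w) ∧
        (∀ a ∈ A2θ, ∀ b ∈ A2θ, a + b * w = 0 → a = 0 ∧ b = 0) := by

  rintro ⟨w, hwstar, hw2, hnorm, hdec, huq⟩
  choose a ha b hb hab using hdec
  -- basic algebraic helpers
  have hwmul : ∀ t : Aθ, w * t * w * w = w * t := by
    intro t; rw [mul_assoc (w * t) w w, hw2, mul_one]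
  have hmul : ∀ p q c d : Aθ,
      (p + q * w) * (c + d * w) = (p * c + q * (w * d * w)) + (p * d + q * (w * c * w)) * w := by
    intro p q c d
    have h1 : (p * d + q * (w * c * w)) * w = p * (d * w) + q * (w * c) := by
      rw [add_mul, mul_assoc p d w, mul_assoc q (w * c * w) w, hwmul]
    rw [h1]; noncomm_ring
  have hstar : ∀ p q : Aθ, star (p + q * w) = star p + (w * star q * w) * w := by
    intro p q
    rw [star_add, star_mul, hwstar, hwmul (star q)]
  -- uniqueness of the decomposition
  have uniq : ∀ p ∈ A2θ, ∀ q ∈ A2θ, ∀ x : Aθ, x = p + q * w → a x = p ∧ b x = q := by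
    intro p hp q hq x hx
    have h0 : (a x - p) + (b x - q) * w = 0 := by
      have h1 : (a x - p) + (b x - q) * w = (a x + b x * w) - (p + q * w) := by noncomm_ring
      rw [h1, ← hab x, ← hx, sub_self]
    obtain ⟨h2, h3⟩ := huq _ (sub_mem (ha x) hp) _ (sub_mem (hb x) hq) h0
    exact ⟨sub_eq_zero.mp h2, sub_eq_zero.mp h3⟩
  -- linearity of the decomposition
  have haddA : ∀ x y : Aθ, a (x + y) = a x + a y ∧ b (x + y) = b x + b y := by
    intro x y
    refine uniq _ (add_mem (ha x) (ha y)) _ (add_mem (hb x) (hb y)) _ ?_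
    conv_lhs => rw [hab x, hab y]
    rw [add_mul]; abel
  have hsmulA : ∀ (c : ℂ) (x : Aθ), a (c • x) = c • a x ∧ b (c • x) = c • b x := by
    intro c x
    refine uniq _ (SMulMemClass.smul_mem c (ha x)) _ (SMulMemClass.smul_mem c (hb x)) _ ?_
    conv_lhs => rw [hab x]
    rw [smul_add, smul_mul_assoc]
  -- product decomposition
  have hμ : ∀ x y : Aθ,
      a (x * y) = a x * a y + b x * (w * b y * w) ∧
      b (x * y) = a x * b y + b x * (w * a y * w) := by
    intro x y
    refine uniq _ (add_mem (mul_mem (ha x) (ha y)) (mul_mem (hb x) (hnorm _ (hb y))))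
      _ (add_mem (mul_mem (ha x) (hb y)) (mul_mem (hb x) (hnorm _ (ha y)))) _ ?_
    conv_lhs => rw [hab x, hab y]
    exact hmul _ _ _ _
  -- the candidate functional
  have hσf : ∀ x : Aθ, 2 * τ (a x) - τ x = τ (a x) - τ (b x * w) := by
    intro x
    have h1 : τ x = τ (a x) + τ (b x * w) := by
      conv_lhs => rw [hab x]
      rw [map_add]
    rw [h1]; ring
  have hσ1 : 2 * τ (a 1) - τ 1 = 1 := by
    have h1 : a (1 : Aθ) = 1 := (uniq 1 (one_mem _) 0 (zero_mem _) 1 (by rw [zero_mul, add_zero])).1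
    rw [h1, hτ1]; ring
  have hσtr : ∀ x y : Aθ, 2 * τ (a (x * y)) - τ (x * y) = 2 * τ (a (y * x)) - τ (y * x) := by
    intro x y
    rw [hσf (x * y), hσf (y * x), (hμ x y).1, (hμ x y).2, (hμ y x).1, (hμ y x).2]
    have e2 : τ (b x * (w * b y * w)) = τ (b y * (w * b x * w)) := by
      have l : b x * (w * b y * w) = (b x * w) * (b y * w) := by noncomm_ring
      have r : b y * (w * b x * w) = (b y * w) * (b x * w) := by noncomm_ring
      rw [l, r, hτtr]
    have e3 : τ ((a x * b y) * w) = τ ((b y * (w * a x * w)) * w) := by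
      have r : (b y * (w * a x * w)) * w = (b y * w) * a x := by
        rw [mul_assoc (b y) (w * a x * w) w, hwmul (a x)]; noncomm_ring
      have l : (a x * b y) * w = a x * (b y * w) := by noncomm_ring
      rw [r, l, hτtr]
    have e4 : τ ((b x * (w * a y * w)) * w) = τ ((a y * b x) * w) := by
      have l : (b x * (w * a y * w)) * w = (b x * w) * a y := by
        rw [mul_assoc (b x) (w * a y * w) w, hwmul (a y)]; noncomm_ring
      have r : (a y * b x) * w = a y * (b x * w) := by noncomm_ring
      rw [l, r, hτtr]
    rw [add_mul, add_mul, map_add, map_add, map_add, map_add, hτtr (a x) (a y), e2, e3, e4]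
    ring
  have hσpos : ∀ x : Aθ, 0 ≤ 2 * τ (a (star x * x)) - τ (star x * x) := by
    intro x
    set p := a x with hp
    set q := b x with hq
    have hx : x = p + q * w := hab x
    set M := star p * p + (w * star q * w) * (w * q * w) with hM
    set N := star p * q + (w * star q * w) * (w * p * w) with hN
    have hsx : star x * x = M + N * w := by
      conv_lhs => rw [hx]
      rw [hstar p q]
      exact hmul (star p) (w * star q * w) p q
    have hm : M ∈ A2θ := add_mem (mul_mem (star_mem (ha x)) (ha x))
      (mul_mem (hnorm _ (star_mem (hb x))) (hnorm _ (hb x)))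
    have hn : N ∈ A2θ := add_mem (mul_mem (star_mem (ha x)) (hb x))
      (mul_mem (hnorm _ (star_mem (hb x))) (hnorm _ (ha x)))
    obtain ⟨hA, hB⟩ := uniq M hm N hn _ hsx
    rw [hσf, hA, hB]
    have hss : star (p - q * w) * (p - q * w) = M - N * w := by
      have h1 : p - q * w = p + (-q) * w := by noncomm_ring
      rw [h1, hstar p (-q), hmul (star p) (w * star (-q) * w) p (-q)]
      simp only [star_neg, hM, hN]
      noncomm_ring
    have hpos := hτpos (p - q * w)
    rw [hss, map_sub] at hpos
    exact hpos
  -- build the linear functional and apply uniqueness of the trace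
  let σ : Aθ →ₗ[ℂ] ℂ :=
    { toFun := fun x => 2 * τ (a x) - τ x
      map_add' := by
        intro x y
        rw [(haddA x y).1, map_add, map_add]; ring
      map_smul' := by
        intro c x
        rw [(hsmulA c x).1, map_smul, map_smul]
        simp only [smul_eq_mul, RingHom.id_apply]
        ring }
  have hσeq : σ = τ := hτuniq σ hσ1 hσtr hσpos
  have hτw : τ w = 0 := by
    have h1 : a w = 0 := (uniq 0 (zero_mem _) 1 (one_mem _) w (by rw [one_mul, zero_add])).1
    have h2 : σ w = τ w := by rw [hσeq]
    have h3 : σ w = 2 * τ (a w) - τ w := rfl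
    rw [h3, h1, map_zero] at h2
    have : (2 : ℂ) * τ w = 0 := by linear_combination -h2
    have h2ne : (2 : ℂ) ≠ 0 := by norm_num
    exact (mul_eq_zero.mp this).resolve_left h2ne
  -- the projection (1+w)/2
  have hPstar : star ((2 : ℂ)⁻¹ • (1 + w)) = (2 : ℂ)⁻¹ • (1 + w) := by
    rw [star_smul, star_add, star_one, hwstar]
    congr 1
    simp [Complex.ext_iff]
  have hPmul : ((2 : ℂ)⁻¹ • (1 + w)) * ((2 : ℂ)⁻¹ • (1 + w)) = (2 : ℂ)⁻¹ • (1 + w) := by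
    have h1 : (1 + w) * (1 + w) = 1 + w + w + w * w := by noncomm_ring
    rw [smul_mul_smul_comm, h1, hw2]
    module
  obtain ⟨m, n, hmn⟩ := hτproj _ hPstar hPmul
  have hval : τ ((2 : ℂ)⁻¹ • (1 + w)) = (2 : ℂ)⁻¹ := by
    rw [map_smul, map_add, hτ1, hτw, add_zero, smul_eq_mul, mul_one]
  rw [hval] at hmn
  have hre : (2 : ℝ)⁻¹ = (m : ℝ) + θ * n := by
    have := congrArg Complex.re hmn
    simpa using this
  rcases eq_or_ne n 0 with hn0 | hn0
  · rw [hn0] at hre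
    push_cast at hre
    have h2m : (2 * m : ℤ) = 1 := by
      have : (2 : ℝ) * (m : ℝ) = 1 := by linarith
      exact_mod_cast this
    omega
  · refine hθ ⟨(1 / 2 - (m : ℚ)) / (n : ℚ), ?_⟩
    have hnR : (n : ℝ) ≠ 0 := Int.cast_ne_zero.mpr hn0
    push_cast
    field_simp
    linarith [hre]


end
end
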